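/- arXiv:2501.07915 — 4 statements merged into one kernel-verified Lean document; each statement's English description precedes it below -/
import Mathlib

section
/- For every x ∈ ℝᵈ, the infimum over P ∈ 𝒜 of xᵀ Hᵀ P⁻¹ H x equals the supremum over ω ∈ [0,1] of xᵀ A_F(ω) x, and both the infimum and the supremum are attained: g(x) = max_{ω ∈ [0,1]} h_x(ω) = min_{P ∈ 𝒜} xᵀ Hᵀ P⁻¹ H x. -/
open Matrix Set

noncomputable section

/-- `H = [I_d; I_d]`, the two vertically stacked `d×d` identity blocks. -/
def Hmat (d : ℕ) : Matrix (Fin d ⊕ Fin d) (Fin d) ℝ :=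
  Matrix.fromRows 1 1

/-- The admissible set `𝒜`: all matrices `P⁽¹⁾ + S` with `P⁽¹⁾` positive
semidefinite with diagonal blocks `P₁` and `P₂`. -/
def Adm (d : ℕ) (P₁ P₂ : Matrix (Fin d) (Fin d) ℝ)
    (S : Matrix (Fin d ⊕ Fin d) (Fin d ⊕ Fin d) ℝ) :
    Set (Matrix (Fin d ⊕ Fin d) (Fin d ⊕ Fin d) ℝ) :=
  {P | ∃ Q : Matrix (Fin d ⊕ Fin d) (Fin d ⊕ Fin d) ℝ,
      Q.PosSemidef ∧ Q.toBlocks₁₁ = P₁ ∧ Q.toBlocks₂₂ = P₂ ∧ P = Q + S}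

/-- The ESCI centralized bound `Bc(ω) = blockdiag(ω⁻¹ P₁, (1-ω)⁻¹ P₂) + S`. -/
def Bc (d : ℕ) (P₁ P₂ : Matrix (Fin d) (Fin d) ℝ)
    (S : Matrix (Fin d ⊕ Fin d) (Fin d ⊕ Fin d) ℝ) (ω : ℝ) :
    Matrix (Fin d ⊕ Fin d) (Fin d ⊕ Fin d) ℝ :=
  Matrix.fromBlocks (ω⁻¹ • P₁) 0 0 ((1 - ω)⁻¹ • P₂) + S

/-- The fused ESCI precision matrix `A_F(ω) = Hᵀ Bc(ω)⁻¹ H`, continuously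
extended at the endpoints. -/
def AF (d : ℕ) (P₁ P₂ : Matrix (Fin d) (Fin d) ℝ)
    (S : Matrix (Fin d ⊕ Fin d) (Fin d ⊕ Fin d) ℝ) (ω : ℝ) :
    Matrix (Fin d) (Fin d) ℝ :=
  if ω = 0 then (P₂ + S.toBlocks₂₂)⁻¹
  else if ω = 1 then (P₁ + S.toBlocks₁₁)⁻¹
  else (Hmat d)ᵀ * (Bc d P₁ P₂ S ω)⁻¹ * Hmat d

/-- The fused ESCI bound `B_F(ω) = A_F(ω)⁻¹`. -/
def BF (d : ℕ) (P₁ P₂ : Matrix (Fin d) (Fin d) ℝ)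
    (S : Matrix (Fin d ⊕ Fin d) (Fin d ⊕ Fin d) ℝ) (ω : ℝ) :
    Matrix (Fin d) (Fin d) ℝ :=
  (AF d P₁ P₂ S ω)⁻¹

/-- `g(x) = inf_{P ∈ 𝒜} xᵀ Hᵀ P⁻¹ H x`. -/
def gfun (d : ℕ) (P₁ P₂ : Matrix (Fin d) (Fin d) ℝ)
    (S : Matrix (Fin d ⊕ Fin d) (Fin d ⊕ Fin d) ℝ) (x : Fin d → ℝ) : ℝ :=
  ⨅ P : (Adm d P₁ P₂ S),
    x ⬝ᵥ ((Hmat d)ᵀ * ((P : Matrix (Fin d ⊕ Fin d) (Fin d ⊕ Fin d) ℝ))⁻¹ * Hmat d) *ᵥ x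

/-- `h_x(ω) = xᵀ A_F(ω) x`. -/
def hfun (d : ℕ) (P₁ P₂ : Matrix (Fin d) (Fin d) ℝ)
    (S : Matrix (Fin d ⊕ Fin d) (Fin d ⊕ Fin d) ℝ) (x : Fin d → ℝ) (ω : ℝ) : ℝ :=
  x ⬝ᵥ (AF d P₁ P₂ S ω) *ᵥ x

namespace CIProof



variable {n : Type*} [Fintype n] [DecidableEq n]

lemma dp_symm {M : Matrix n n ℝ} (hM : M.IsHermitian) (u v : n → ℝ) :
    u ⬝ᵥ M *ᵥ v = v ⬝ᵥ M *ᵥ u := by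
  have ht : Mᵀ = M := by
    rw [← conjTranspose_eq_transpose_of_trivial]; exact hM
  rw [dotProduct_mulVec, show u ᵥ* M = M *ᵥ u by rw [← vecMul_transpose, ht]]
  exact dotProduct_comm _ _

lemma psd_nonneg {M : Matrix n n ℝ} (hM : M.PosSemidef) (v : n → ℝ) :
    0 ≤ v ⬝ᵥ M *ᵥ v := by simpa using hM.dotProduct_mulVec_nonneg v

lemma pd_pos {M : Matrix n n ℝ} (hM : M.PosDef) {v : n → ℝ} (hv : v ≠ 0) :
    0 < v ⬝ᵥ M *ᵥ v := by simpa using hM.dotProduct_mulVec_pos hv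

lemma pd_quad_zero {M : Matrix n n ℝ} (hM : M.PosDef) {v : n → ℝ}
    (h : v ⬝ᵥ M *ᵥ v = 0) : v = 0 := by
  by_contra hv
  exact absurd h (pd_pos hM hv).ne'

lemma pd_mulVec_inv {M : Matrix n n ℝ} (hM : M.PosDef) (v : n → ℝ) :
    M *ᵥ (M⁻¹ *ᵥ v) = v := by
  rw [mulVec_mulVec, Matrix.mul_nonsing_inv _ (isUnit_iff_isUnit_det _ |>.1 hM.isUnit), one_mulVec]

lemma pd_inv_mulVec {M : Matrix n n ℝ} (hM : M.PosDef) (v : n → ℝ) :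
    M⁻¹ *ᵥ (M *ᵥ v) = v := by
  rw [mulVec_mulVec, Matrix.nonsing_inv_mul _ (isUnit_iff_isUnit_det _ |>.1 hM.isUnit), one_mulVec]

/-- Core identity for the variational characterization of `y ⬝ A⁻¹ y`. -/
lemma key_identity {A : Matrix n n ℝ} (hA : A.PosDef) (y z : n → ℝ) :
    y ⬝ᵥ A⁻¹ *ᵥ y - (2 * (z ⬝ᵥ y) - z ⬝ᵥ A *ᵥ z)
      = (z - A⁻¹ *ᵥ y) ⬝ᵥ A *ᵥ (z - A⁻¹ *ᵥ y) := by
  set u := A⁻¹ *ᵥ y with hu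
  have hAu : A *ᵥ u = y := pd_mulVec_inv hA y
  have h1 : (z - u) ⬝ᵥ A *ᵥ (z - u)
      = z ⬝ᵥ A *ᵥ z - z ⬝ᵥ A *ᵥ u - u ⬝ᵥ A *ᵥ z + u ⬝ᵥ A *ᵥ u := by
    rw [sub_dotProduct, mulVec_sub, dotProduct_sub, dotProduct_sub]; ring
  have h2 : u ⬝ᵥ A *ᵥ z = z ⬝ᵥ A *ᵥ u := dp_symm hA.isHermitian u z
  have h3 : z ⬝ᵥ A *ᵥ u = z ⬝ᵥ y := by rw [hAu]
  have h4 : u ⬝ᵥ A *ᵥ u = y ⬝ᵥ A⁻¹ *ᵥ y := by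
    rw [hAu]  -- u ⬝ᵥ y ; need y ⬝ᵥ A⁻¹ *ᵥ y = u ⬝ᵥ y
    rw [hu, dotProduct_comm]
  rw [h1, h2, h3, h4]; ring

lemma quad_le_inv {A : Matrix n n ℝ} (hA : A.PosDef) (y z : n → ℝ) :
    2 * (z ⬝ᵥ y) - z ⬝ᵥ A *ᵥ z ≤ y ⬝ᵥ A⁻¹ *ᵥ y := by
  have := psd_nonneg hA.posSemidef (z - A⁻¹ *ᵥ y)
  have h := key_identity hA y z
  linarith [h ▸ this]

lemma quad_eq_inv {A : Matrix n n ℝ} (hA : A.PosDef) {y z : n → ℝ} (hz : A *ᵥ z = y) :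
    2 * (z ⬝ᵥ y) - z ⬝ᵥ A *ᵥ z = y ⬝ᵥ A⁻¹ *ᵥ y := by
  have hzu : z = A⁻¹ *ᵥ y := by rw [← hz, pd_inv_mulVec hA]
  have h := key_identity hA y z
  rw [← hzu, sub_self] at h
  simp only [zero_dotProduct] at h
  have hc : y ⬝ᵥ z = z ⬝ᵥ y := dotProduct_comm _ _
  rw [← hzu]
  linarith

lemma quad_eq_iff {A : Matrix n n ℝ} (hA : A.PosDef) {y z : n → ℝ}
    (h : 2 * (z ⬝ᵥ y) - z ⬝ᵥ A *ᵥ z = y ⬝ᵥ A⁻¹ *ᵥ y) : A *ᵥ z = y := by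
  have h2 := key_identity hA y z
  rw [h, sub_self] at h2
  have : z - A⁻¹ *ᵥ y = 0 := pd_quad_zero hA h2.symm
  have hz : z = A⁻¹ *ᵥ y := by rwa [sub_eq_zero] at this
  rw [hz]; exact pd_mulVec_inv hA y

/-- Cauchy–Schwarz for a positive semidefinite quadratic form. -/
lemma psd_cauchy_schwarz {M : Matrix n n ℝ} (hM : M.PosSemidef) (u v : n → ℝ) :
    (u ⬝ᵥ M *ᵥ v) ^ 2 ≤ (u ⬝ᵥ M *ᵥ u) * (v ⬝ᵥ M *ᵥ v) := by
  have key : ∀ t : ℝ, 0 ≤ (v ⬝ᵥ M *ᵥ v) * (t * t) + (2 * (u ⬝ᵥ M *ᵥ v)) * t + (u ⬝ᵥ M *ᵥ u) := by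
    intro t
    have h := psd_nonneg hM (u + t • v)
    have hsym := dp_symm hM.isHermitian v u
    have hexp : (u + t • v) ⬝ᵥ M *ᵥ (u + t • v)
        = (v ⬝ᵥ M *ᵥ v) * (t * t) + (2 * (u ⬝ᵥ M *ᵥ v)) * t + (u ⬝ᵥ M *ᵥ u) := by
      simp only [add_dotProduct, mulVec_add, dotProduct_add, mulVec_smul,
        dotProduct_smul, smul_dotProduct, smul_eq_mul]
      rw [hsym]; ring
    linarith [hexp ▸ h]
  have hd := discrim_le_zero key
  rw [discrim] at hd
  nlinarith



variable {n₁ n₂ : Type*} [Fintype n₁] [Fintype n₂] [DecidableEq n₁] [DecidableEq n₂]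

lemma elim_comp₁ (u : n₁ → ℝ) (v : n₂ → ℝ) : Sum.elim u v ∘ Sum.inl = u := rfl
lemma elim_comp₂ (u : n₁ → ℝ) (v : n₂ → ℝ) : Sum.elim u v ∘ Sum.inr = v := rfl

lemma elim_dp_fromBlocks (A : Matrix n₁ n₁ ℝ) (B : Matrix n₁ n₂ ℝ) (C : Matrix n₂ n₁ ℝ)
    (D : Matrix n₂ n₂ ℝ) (u₁ v₁ : n₁ → ℝ) (u₂ v₂ : n₂ → ℝ) :
    Sum.elim u₁ u₂ ⬝ᵥ (fromBlocks A B C D) *ᵥ Sum.elim v₁ v₂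
      = u₁ ⬝ᵥ A *ᵥ v₁ + u₁ ⬝ᵥ B *ᵥ v₂ + u₂ ⬝ᵥ C *ᵥ v₁ + u₂ ⬝ᵥ D *ᵥ v₂ := by
  rw [fromBlocks_mulVec, elim_comp₁, elim_comp₂, sumElim_dotProduct_sumElim,
    dotProduct_add, dotProduct_add]
  ring

lemma elim_dp_elim (u₁ v₁ : n₁ → ℝ) (u₂ v₂ : n₂ → ℝ) :
    Sum.elim u₁ u₂ ⬝ᵥ Sum.elim v₁ v₂ = u₁ ⬝ᵥ v₁ + u₂ ⬝ᵥ v₂ :=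
  sumElim_dotProduct_sumElim _ _ _ _

lemma elim_ne_zero₁ {u : n₁ → ℝ} (hu : u ≠ 0) (v : n₂ → ℝ) : Sum.elim u v ≠ 0 := by
  intro h; exact hu (funext fun i => congrFun h (Sum.inl i))

lemma elim_ne_zero₂ (u : n₁ → ℝ) {v : n₂ → ℝ} (hv : v ≠ 0) : Sum.elim u v ≠ 0 := by
  intro h; exact hv (funext fun i => congrFun h (Sum.inr i))

lemma posSemidef_smul {A : Matrix n₁ n₁ ℝ} (hA : A.PosSemidef) {c : ℝ} (hc : 0 ≤ c) :
    (c • A).PosSemidef := by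
  refine PosSemidef.of_dotProduct_mulVec_nonneg ?_ fun v => ?_
  · unfold Matrix.IsHermitian
    rw [conjTranspose_smul, hA.1]
    simp
  · rw [smul_mulVec, dotProduct_smul, smul_eq_mul]
    exact mul_nonneg hc (hA.dotProduct_mulVec_nonneg v)

lemma posSemidef_blockdiag {A : Matrix n₁ n₁ ℝ} {D : Matrix n₂ n₂ ℝ}
    (hA : A.PosSemidef) (hD : D.PosSemidef) : (fromBlocks A 0 0 D).PosSemidef := by
  refine PosSemidef.of_dotProduct_mulVec_nonneg (IsHermitian.fromBlocks hA.1 (by simp) hD.1) fun z => ?_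
  have hz : Sum.elim (z ∘ Sum.inl) (z ∘ Sum.inr) = z := Sum.elim_comp_inl_inr z
  rw [show star z = z from star_trivial z, ← hz, elim_dp_fromBlocks]
  simp only [zero_mulVec, dotProduct_zero]
  have h1 : 0 ≤ (z ∘ Sum.inl) ⬝ᵥ A *ᵥ (z ∘ Sum.inl) := by simpa using hA.dotProduct_mulVec_nonneg _
  have h2 : 0 ≤ (z ∘ Sum.inr) ⬝ᵥ D *ᵥ (z ∘ Sum.inr) := by simpa using hD.dotProduct_mulVec_nonneg _
  linarith

lemma isHermitian_toBlocks₁₁ {S : Matrix (n₁ ⊕ n₂) (n₁ ⊕ n₂) ℝ} (hS : S.IsHermitian) :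
    S.toBlocks₁₁.IsHermitian := by
  ext i j
  have := congrFun (congrFun hS (Sum.inl i)) (Sum.inl j)
  simpa [conjTranspose_apply, toBlocks₁₁] using this

lemma isHermitian_toBlocks₂₂ {S : Matrix (n₁ ⊕ n₂) (n₁ ⊕ n₂) ℝ} (hS : S.IsHermitian) :
    S.toBlocks₂₂.IsHermitian := by
  ext i j
  have := congrFun (congrFun hS (Sum.inr i)) (Sum.inr j)
  simpa [conjTranspose_apply, toBlocks₂₂] using this

lemma dp_toBlocks₁₁ (S : Matrix (n₁ ⊕ n₂) (n₁ ⊕ n₂) ℝ) (u v : n₁ → ℝ) :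
    Sum.elim u 0 ⬝ᵥ S *ᵥ Sum.elim v 0 = u ⬝ᵥ S.toBlocks₁₁ *ᵥ v := by
  conv_lhs => rw [← fromBlocks_toBlocks S]
  rw [elim_dp_fromBlocks]
  simp

lemma dp_toBlocks₂₂ (S : Matrix (n₁ ⊕ n₂) (n₁ ⊕ n₂) ℝ) (u v : n₂ → ℝ) :
    Sum.elim 0 u ⬝ᵥ S *ᵥ Sum.elim 0 v = u ⬝ᵥ S.toBlocks₂₂ *ᵥ v := by
  conv_lhs => rw [← fromBlocks_toBlocks S]
  rw [elim_dp_fromBlocks]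
  simp

lemma posDef_toBlocks₁₁ {S : Matrix (n₁ ⊕ n₂) (n₁ ⊕ n₂) ℝ} (hS : S.PosDef) :
    S.toBlocks₁₁.PosDef := by
  refine PosDef.of_dotProduct_mulVec_pos (isHermitian_toBlocks₁₁ hS.1) fun v hv => ?_
  have h := hS.dotProduct_mulVec_pos (elim_ne_zero₁ hv 0)
  rw [show star (Sum.elim v 0) = Sum.elim v 0 from star_trivial _, dp_toBlocks₁₁] at h
  simpa using h

lemma posDef_toBlocks₂₂ {S : Matrix (n₁ ⊕ n₂) (n₁ ⊕ n₂) ℝ} (hS : S.PosDef) :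
    S.toBlocks₂₂.PosDef := by
  refine PosDef.of_dotProduct_mulVec_pos (isHermitian_toBlocks₂₂ hS.1) fun v hv => ?_
  have h := hS.dotProduct_mulVec_pos (elim_ne_zero₂ (0 : n₁ → ℝ) hv)
  rw [show star (Sum.elim (0 : n₁ → ℝ) v) = Sum.elim (0 : n₁ → ℝ) v from star_trivial _,
    dp_toBlocks₂₂] at h
  simpa using h

lemma vecMulVec_mulVec (u : n₁ → ℝ) (v : n₂ → ℝ) (w : n₂ → ℝ) :
    vecMulVec u v *ᵥ w = (v ⬝ᵥ w) • u := by
  ext i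
  simp only [mulVec, dotProduct, vecMulVec_apply, Pi.smul_apply, smul_eq_mul, Finset.sum_mul]
  exact Finset.sum_congr rfl fun j _ => by ring

lemma transpose_vecMulVec (u : n₁ → ℝ) (v : n₂ → ℝ) :
    (vecMulVec u v)ᵀ = vecMulVec v u := by
  ext i j; simp [vecMulVec_apply, transpose_apply, mul_comm]



lemma continuous_quad {n : Type*} [Fintype n] (M : Matrix n n ℝ) :
    Continuous fun z : n → ℝ => z ⬝ᵥ M *ᵥ z := by
  have : (fun z : n → ℝ => z ⬝ᵥ M *ᵥ z) = fun z => ∑ i, z i * ∑ j, M i j * z j := rfl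
  rw [this]
  exact continuous_finset_sum _ fun i _ =>
    (continuous_apply i).mul (continuous_finset_sum _ fun j _ =>
      continuous_const.mul (continuous_apply j))

lemma continuous_dp {n : Type*} [Fintype n] (y : n → ℝ) :
    Continuous fun z : n → ℝ => z ⬝ᵥ y := by
  have : (fun z : n → ℝ => z ⬝ᵥ y) = fun z => ∑ i, z i * y i := rfl
  rw [this]
  exact continuous_finset_sum _ fun i _ => (continuous_apply i).mul continuous_const

lemma quad_lower_bound {n : Type*} [Fintype n] [Nonempty n] {S : Matrix n n ℝ}
    (hS : S.PosDef) : ∃ ε > 0, ∀ z : n → ℝ, ε * ‖z‖ ^ 2 ≤ z ⬝ᵥ S *ᵥ z := by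
  have hsph : (Metric.sphere (0 : n → ℝ) 1).Nonempty :=
    NormedSpace.sphere_nonempty.mpr zero_le_one
  obtain ⟨u₀, hu₀mem, hu₀min⟩ := (isCompact_sphere (0 : n → ℝ) 1).exists_isMinOn hsph
    (continuous_quad S).continuousOn
  have hu₀ : u₀ ≠ 0 := by
    intro h
    rw [mem_sphere_zero_iff_norm, h, norm_zero] at hu₀mem
    norm_num at hu₀mem
  refine ⟨u₀ ⬝ᵥ S *ᵥ u₀, by simpa using hS.dotProduct_mulVec_pos hu₀, fun z => ?_⟩
  rcases eq_or_ne z 0 with rfl | hz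
  · simp
  · have hnz : ‖z‖ ≠ 0 := norm_ne_zero_iff.mpr hz
    set u : n → ℝ := ‖z‖⁻¹ • z with hu
    have humem : u ∈ Metric.sphere (0 : n → ℝ) 1 := by
      rw [mem_sphere_zero_iff_norm, hu, norm_smul, norm_inv, norm_norm,
        inv_mul_cancel₀ hnz]
    have hzu : z = ‖z‖ • u := by
      rw [hu, smul_smul, mul_inv_cancel₀ hnz, one_smul]
    have hq2 : u ⬝ᵥ S *ᵥ u = ‖z‖⁻¹ * ‖z‖⁻¹ * (z ⬝ᵥ S *ᵥ z) := by
      rw [hu, smul_dotProduct, mulVec_smul, dotProduct_smul, smul_eq_mul, smul_eq_mul]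
      ring
    have hzz : z ⬝ᵥ S *ᵥ z = ‖z‖ ^ 2 * (u ⬝ᵥ S *ᵥ u) := by
      rw [hq2]
      field_simp
    have hmin : u₀ ⬝ᵥ S *ᵥ u₀ ≤ u ⬝ᵥ S *ᵥ u := hu₀min humem
    rw [hzz]
    have h2 : (0:ℝ) ≤ ‖z‖ ^ 2 := sq_nonneg _
    nlinarith

lemma dp_le_norm {n : Type*} [Fintype n] (y z : n → ℝ) :
    z ⬝ᵥ y ≤ (∑ i, |y i|) * ‖z‖ := by
  have : z ⬝ᵥ y = ∑ i, z i * y i := rfl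
  rw [this, Finset.sum_mul]
  refine Finset.sum_le_sum fun i _ => ?_
  have h1 : z i * y i ≤ |z i| * |y i| := by
    calc z i * y i ≤ |z i * y i| := le_abs_self _
    _ = |z i| * |y i| := abs_mul _ _
  have h2 : |z i| ≤ ‖z‖ := by
    have := norm_le_pi_norm z i
    simpa [Real.norm_eq_abs] using this
  nlinarith [abs_nonneg (y i), abs_nonneg (z i)]

lemma exists_global_max {n : Type*} [Fintype n] [Nonempty n] {χ : (n → ℝ) → ℝ}
    (hcont : Continuous χ) {S : Matrix n n ℝ} (hS : S.PosDef) (y : n → ℝ)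
    (hbound : ∀ z, χ z ≤ 2 * (z ⬝ᵥ y) - z ⬝ᵥ S *ᵥ z) (hz0 : χ 0 = 0) :
    ∃ z, ∀ w, χ w ≤ χ z := by
  obtain ⟨ε, hε, hquad⟩ := quad_lower_bound hS
  set Cy := ∑ i, |y i| with hCy
  have hCy0 : 0 ≤ Cy := Finset.sum_nonneg fun i _ => abs_nonneg _
  set R := (2 * Cy + 1) / ε with hR
  have hR0 : 0 < R := by positivity
  have hK : IsCompact (Metric.closedBall (0 : n → ℝ) R) := isCompact_closedBall _ _
  obtain ⟨z, hzmem, hzmax⟩ := hK.exists_isMaxOn ⟨0, by simp [hR0.le]⟩ hcont.continuousOn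
  have h0K : (0 : n → ℝ) ∈ Metric.closedBall (0 : n → ℝ) R := by simp [hR0.le]
  have hz0le : (0:ℝ) ≤ χ z := by
    have h : χ 0 ≤ χ z := hzmax h0K
    linarith
  refine ⟨z, fun w => ?_⟩
  by_cases hw : w ∈ Metric.closedBall (0 : n → ℝ) R
  · exact hzmax hw
  · have hwn : R < ‖w‖ := by
      rw [Metric.mem_closedBall, dist_zero_right] at hw
      linarith [not_le.mp hw]
    have h1 := hbound w
    have h2 := hquad w
    have h3 := dp_le_norm y w
    have h4 : ε * ‖w‖ > 2 * Cy + 1 := by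
      have : ε * R = 2 * Cy + 1 := by rw [hR]; field_simp [hε.ne']
      nlinarith
    have h5 : χ w ≤ 2 * Cy * ‖w‖ - ε * ‖w‖ ^ 2 := by nlinarith
    have h6 : χ w < 0 := by nlinarith [hwn.trans_le (le_refl _), hR0]
    linarith



-- scalar helpers
lemma scalar_amgm {ω c d : ℝ} (h0 : 0 < ω) (h1 : ω < 1) :
    (c + d) ^ 2 ≤ ω⁻¹ * c ^ 2 + (1 - ω)⁻¹ * d ^ 2 := by
  have h2 : 0 < 1 - ω := by linarith
  have key : ω⁻¹ * c ^ 2 + (1 - ω)⁻¹ * d ^ 2 - (c + d) ^ 2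
      = ((1 - ω) * c - ω * d) ^ 2 / (ω * (1 - ω)) := by
    field_simp
    ring
  nlinarith [sq_nonneg ((1 - ω) * c - ω * d), mul_pos h0 h2,
    div_nonneg (sq_nonneg ((1 - ω) * c - ω * d)) (mul_pos h0 h2).le]

lemma eps_le_zero {c C : ℝ} (hC : 0 ≤ C) (h : ∀ ε : ℝ, 0 < ε → 2 * ε * c ≤ ε ^ 2 * C) :
    c ≤ 0 := by
  by_contra hc
  push_neg at hc
  have hε : 0 < c / (C + 1) := by positivity
  have := h _ hε
  have hC1 : 0 < C + 1 := by linarith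
  rw [div_pow] at this
  have h2 : 2 * (c / (C + 1)) * c * (C + 1) ^ 2 ≤ c ^ 2 / (C + 1) ^ 2 * C * (C + 1) ^ 2 := by
    nlinarith [sq_nonneg (C + 1)]
  have h3 : 2 * c ^ 2 * (C + 1) ≤ c ^ 2 * C := by
    have e1 : 2 * (c / (C + 1)) * c * (C + 1) ^ 2 = 2 * c ^ 2 * (C + 1) := by
      field_simp
    have e2 : c ^ 2 / (C + 1) ^ 2 * C * (C + 1) ^ 2 = c ^ 2 * C := by
      field_simp
    rw [e1, e2] at h2
    exact h2
  nlinarith [sq_nonneg c, mul_pos hc hc]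


section Main
variable {d : ℕ}

lemma dp_Hmat (M : Matrix (Fin d ⊕ Fin d) (Fin d ⊕ Fin d) ℝ) (x : Fin d → ℝ) :
    x ⬝ᵥ ((Hmat d)ᵀ * M * Hmat d) *ᵥ x = Sum.elim x x ⬝ᵥ M *ᵥ Sum.elim x x := by
  have hH : Hmat d *ᵥ x = Sum.elim x x := by
    unfold Hmat
    rw [fromRows_mulVec, one_mulVec]
  rw [← mulVec_mulVec, ← mulVec_mulVec, dotProduct_mulVec, vecMul_transpose, hH]

variable {P₁ P₂ : Matrix (Fin d) (Fin d) ℝ} {S : Matrix (Fin d ⊕ Fin d) (Fin d ⊕ Fin d) ℝ}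

lemma hfun_zero (x : Fin d → ℝ) :
    hfun d P₁ P₂ S x 0 = x ⬝ᵥ (P₂ + S.toBlocks₂₂)⁻¹ *ᵥ x := by
  simp [hfun, AF, ← mulVec_mulVec]

lemma hfun_one (x : Fin d → ℝ) :
    hfun d P₁ P₂ S x 1 = x ⬝ᵥ (P₁ + S.toBlocks₁₁)⁻¹ *ᵥ x := by
  simp [hfun, AF, ← mulVec_mulVec]

lemma hfun_int (x : Fin d → ℝ) {ω : ℝ} (hω0 : ω ≠ 0) (hω1 : ω ≠ 1) :
    hfun d P₁ P₂ S x ω = Sum.elim x x ⬝ᵥ (Bc d P₁ P₂ S ω)⁻¹ *ᵥ Sum.elim x x := by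
  rw [hfun, AF, if_neg hω0, if_neg hω1, dp_Hmat]

lemma dp_blocks (M : Matrix (Fin d ⊕ Fin d) (Fin d ⊕ Fin d) ℝ) (u₁ u₂ v₁ v₂ : Fin d → ℝ) :
    Sum.elim u₁ u₂ ⬝ᵥ M *ᵥ Sum.elim v₁ v₂
      = u₁ ⬝ᵥ M.toBlocks₁₁ *ᵥ v₁ + u₁ ⬝ᵥ M.toBlocks₁₂ *ᵥ v₂
        + u₂ ⬝ᵥ M.toBlocks₂₁ *ᵥ v₁ + u₂ ⬝ᵥ M.toBlocks₂₂ *ᵥ v₂ := by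
  conv_lhs => rw [← fromBlocks_toBlocks M]
  rw [elim_dp_fromBlocks]

lemma Adm_posDef (hS : S.PosDef) {P : Matrix (Fin d ⊕ Fin d) (Fin d ⊕ Fin d) ℝ}
    (hP : P ∈ Adm d P₁ P₂ S) : P.PosDef := by
  obtain ⟨Q, hQ, -, -, rfl⟩ := hP
  exact Matrix.PosDef.posSemidef_add hQ hS

lemma bc_posDef (hP₁ : P₁.PosDef) (hP₂ : P₂.PosDef) (hS : S.PosDef) {ω : ℝ}
    (h0 : 0 < ω) (h1 : ω < 1) : (Bc d P₁ P₂ S ω).PosDef := by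
  unfold Bc
  refine Matrix.PosDef.posSemidef_add ?_ hS
  exact posSemidef_blockdiag
    (posSemidef_smul hP₁.posSemidef (inv_pos.mpr h0).le)
    (posSemidef_smul hP₂.posSemidef (inv_pos.mpr (by linarith : (0:ℝ) < 1 - ω)).le)

lemma bc_quad (ω : ℝ) (w₁ w₂ : Fin d → ℝ) :
    Sum.elim w₁ w₂ ⬝ᵥ Bc d P₁ P₂ S ω *ᵥ Sum.elim w₁ w₂
      = ω⁻¹ * (w₁ ⬝ᵥ P₁ *ᵥ w₁) + (1 - ω)⁻¹ * (w₂ ⬝ᵥ P₂ *ᵥ w₂)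
        + Sum.elim w₁ w₂ ⬝ᵥ S *ᵥ Sum.elim w₁ w₂ := by
  unfold Bc
  rw [add_mulVec, dotProduct_add, elim_dp_fromBlocks]
  simp only [zero_mulVec, dotProduct_zero, add_zero, zero_add]
  rw [smul_mulVec, dotProduct_smul, smul_mulVec, dotProduct_smul,
    smul_eq_mul, smul_eq_mul]
  try ring

/-- The key off-diagonal bound: for `Q` PSD with diagonal blocks `P₁, P₂`. -/
lemma quadQ_le {Q : Matrix (Fin d ⊕ Fin d) (Fin d ⊕ Fin d) ℝ} (hQ : Q.PosSemidef)
    (h11 : Q.toBlocks₁₁ = P₁) (h22 : Q.toBlocks₂₂ = P₂) {ω : ℝ}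
    (h0 : 0 < ω) (h1 : ω < 1) (w₁ w₂ : Fin d → ℝ) :
    Sum.elim w₁ w₂ ⬝ᵥ Q *ᵥ Sum.elim w₁ w₂
      ≤ ω⁻¹ * (w₁ ⬝ᵥ P₁ *ᵥ w₁) + (1 - ω)⁻¹ * (w₂ ⬝ᵥ P₂ *ᵥ w₂) := by
  have h1ω : 0 < 1 - ω := by linarith
  set s : ℝ := Real.sqrt ((1 - ω) / ω) with hs
  have hs2 : s ^ 2 = (1 - ω) / ω := Real.sq_sqrt (by positivity)
  have hspos : 0 < s := Real.sqrt_pos.mpr (by positivity)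
  have hpsd := psd_nonneg hQ (Sum.elim (s • w₁) (-(s⁻¹) • w₂))
  rw [dp_blocks] at hpsd
  have hexp : ∀ (A : Matrix (Fin d) (Fin d) ℝ) (c c' : ℝ) (u v : Fin d → ℝ),
      (c • u) ⬝ᵥ A *ᵥ (c' • v) = c * c' * (u ⬝ᵥ A *ᵥ v) := by
    intro A c c' u v
    rw [smul_dotProduct, mulVec_smul, dotProduct_smul, smul_eq_mul, smul_eq_mul]
    ring
  rw [hexp, hexp, hexp, hexp, h11, h22] at hpsd
  have hq := psd_nonneg hQ (Sum.elim w₁ w₂)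
  rw [dp_blocks, h11, h22] at hq
  have hgoal := dp_blocks Q w₁ w₂ w₁ w₂
  rw [h11, h22] at hgoal
  rw [hgoal]
  have hss : s * s⁻¹ = 1 := mul_inv_cancel₀ hspos.ne'
  have hs2' : s * s = (1 - ω) / ω := by rw [← hs2]; ring
  have hsinv : s⁻¹ * s⁻¹ = ω / (1 - ω) := by
    rw [← mul_inv, hs2', inv_div]
  have e1 : s * -s⁻¹ = -1 := by rw [mul_neg, hss]
  have e2 : -s⁻¹ * s = -1 := by rw [neg_mul, mul_comm, hss]
  have e3 : -s⁻¹ * -s⁻¹ = ω / (1 - ω) := by rw [neg_mul_neg, hsinv]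
  rw [hs2', e1, e2, e3] at hpsd
  have hinv1 : ω⁻¹ = 1 + (1 - ω) / ω := by field_simp; ring
  have hinv2 : (1 - ω)⁻¹ = 1 + ω / (1 - ω) := by field_simp; ring
  rw [hinv1, hinv2]
  nlinarith [hpsd]

lemma weak_dual (hP₁ : P₁.PosDef) (hP₂ : P₂.PosDef) (hS : S.PosDef) (x : Fin d → ℝ)
    {ω : ℝ} (hω : ω ∈ Set.Icc (0:ℝ) 1) {P : Matrix (Fin d ⊕ Fin d) (Fin d ⊕ Fin d) ℝ}
    (hP : P ∈ Adm d P₁ P₂ S) :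
    hfun d P₁ P₂ S x ω ≤ Sum.elim x x ⬝ᵥ P⁻¹ *ᵥ Sum.elim x x := by
  obtain ⟨Q, hQ, h11, h22, rfl⟩ := hP
  have hPd : (Q + S).PosDef := Matrix.PosDef.posSemidef_add hQ hS
  set y : Fin d ⊕ Fin d → ℝ := Sum.elim x x with hy
  rcases eq_or_ne ω 0 with rfl | hω0
  · -- endpoint 0
    set A₂ := P₂ + S.toBlocks₂₂ with hA₂
    have hA₂d : A₂.PosDef := hP₂.add (posDef_toBlocks₂₂ hS)
    set z₂ := A₂⁻¹ *ᵥ x with hz₂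
    have hAz : A₂ *ᵥ z₂ = x := pd_mulVec_inv hA₂d x
    have hval : hfun d P₁ P₂ S x 0 = 2 * (z₂ ⬝ᵥ x) - z₂ ⬝ᵥ A₂ *ᵥ z₂ :=
      (hfun_zero x).trans (quad_eq_inv hA₂d hAz).symm
    set z : Fin d ⊕ Fin d → ℝ := Sum.elim (0 : Fin d → ℝ) z₂ with hz
    have hzy : z ⬝ᵥ y = z₂ ⬝ᵥ x := by
      rw [hz, hy, elim_dp_elim, zero_dotProduct, zero_add]
    have hzP : z ⬝ᵥ (Q + S) *ᵥ z = z₂ ⬝ᵥ A₂ *ᵥ z₂ := by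
      rw [hz, add_mulVec, dotProduct_add, dp_blocks, dp_blocks, h22, hA₂, add_mulVec,
        dotProduct_add]
      simp
    have := quad_le_inv hPd y z
    rw [hzy, hzP] at this
    rw [hval]
    exact this
  rcases eq_or_ne ω 1 with rfl | hω1
  · -- endpoint 1
    set A₁ := P₁ + S.toBlocks₁₁ with hA₁
    have hA₁d : A₁.PosDef := hP₁.add (posDef_toBlocks₁₁ hS)
    set z₁ := A₁⁻¹ *ᵥ x with hz₁
    have hAz : A₁ *ᵥ z₁ = x := pd_mulVec_inv hA₁d x
    have hval : hfun d P₁ P₂ S x 1 = 2 * (z₁ ⬝ᵥ x) - z₁ ⬝ᵥ A₁ *ᵥ z₁ :=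
      (hfun_one x).trans (quad_eq_inv hA₁d hAz).symm
    set z : Fin d ⊕ Fin d → ℝ := Sum.elim z₁ (0 : Fin d → ℝ) with hz
    have hzy : z ⬝ᵥ y = z₁ ⬝ᵥ x := by
      rw [hz, hy, elim_dp_elim, zero_dotProduct, add_zero]
    have hzP : z ⬝ᵥ (Q + S) *ᵥ z = z₁ ⬝ᵥ A₁ *ᵥ z₁ := by
      rw [hz, add_mulVec, dotProduct_add, dp_blocks, dp_blocks, h11, hA₁, add_mulVec,
        dotProduct_add]
      simp
    have := quad_le_inv hPd y z
    rw [hzy, hzP] at this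
    rw [hval]
    exact this
  · -- interior
    have h0 : 0 < ω := lt_of_le_of_ne hω.1 (Ne.symm hω0)
    have h1 : ω < 1 := lt_of_le_of_ne hω.2 hω1
    have hBc : (Bc d P₁ P₂ S ω).PosDef := bc_posDef hP₁ hP₂ hS h0 h1
    set z := (Bc d P₁ P₂ S ω)⁻¹ *ᵥ y with hzdef
    have hBz : Bc d P₁ P₂ S ω *ᵥ z = y := pd_mulVec_inv hBc y
    have hval : hfun d P₁ P₂ S x ω = 2 * (z ⬝ᵥ y) - z ⬝ᵥ Bc d P₁ P₂ S ω *ᵥ z :=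
      (hfun_int x hω0 hω1).trans (quad_eq_inv hBc hBz).symm
    have hcmp : z ⬝ᵥ (Q + S) *ᵥ z ≤ z ⬝ᵥ Bc d P₁ P₂ S ω *ᵥ z := by
      have hzz : Sum.elim (z ∘ Sum.inl) (z ∘ Sum.inr) = z := Sum.elim_comp_inl_inr z
      rw [← hzz, bc_quad, add_mulVec, dotProduct_add]
      have hQle := quadQ_le hQ h11 h22 h0 h1 (z ∘ Sum.inl) (z ∘ Sum.inr)
      linarith
    have := quad_le_inv hPd y z
    rw [hval]
    linarith
end Main

section Strong
variable {d : ℕ} {P₁ P₂ : Matrix (Fin d) (Fin d) ℝ} {S : Matrix (Fin d ⊕ Fin d) (Fin d ⊕ Fin d) ℝ}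

lemma dp_transpose {n₁ n₂ : Type*} [Fintype n₁] [Fintype n₂]
    (M : Matrix n₁ n₂ ℝ) (u : n₁ → ℝ) (v : n₂ → ℝ) :
    u ⬝ᵥ M *ᵥ v = v ⬝ᵥ Mᵀ *ᵥ u := by
  rw [dotProduct_mulVec, dotProduct_comm, ← mulVec_transpose]

lemma toBlocks₁₂_transpose (hS : S.IsHermitian) : S.toBlocks₁₂ᵀ = S.toBlocks₂₁ := by
  ext i j
  have := congrFun (congrFun hS (Sum.inr i)) (Sum.inl j)
  simpa [Matrix.conjTranspose_apply, Matrix.toBlocks₁₂, Matrix.toBlocks₂₁] using this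

lemma elim_add {n₁ n₂ : Type*} (u u' : n₁ → ℝ) (v v' : n₂ → ℝ) :
    Sum.elim u v + Sum.elim u' v' = Sum.elim (u + u') (v + v') := by
  funext i; cases i <;> simp

lemma dp_self_pos {n : Type*} [Fintype n] {v : n → ℝ} (hv : v ≠ 0) : 0 < v ⬝ᵥ v := by
  have h1 : 0 ≤ v ⬝ᵥ v := Finset.sum_nonneg fun i _ => mul_self_nonneg _
  have h2 : v ⬝ᵥ v ≠ 0 := fun h => hv (dotProduct_self_eq_zero.mp h)
  exact lt_of_le_of_ne h1 (Ne.symm h2)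

lemma adm_blockdiag_mem (hP₁ : P₁.PosDef) (hP₂ : P₂.PosDef) :
    (Matrix.fromBlocks P₁ 0 0 P₂ + S) ∈ Adm d P₁ P₂ S :=
  ⟨_, posSemidef_blockdiag hP₁.posSemidef hP₂.posSemidef,
    toBlocks_fromBlocks₁₁ _ _ _ _, toBlocks_fromBlocks₂₂ _ _ _ _, rfl⟩

set_option maxHeartbeats 1600000 in
lemma strong_dual (hd : 1 ≤ d) (hP₁ : P₁.PosDef) (hP₂ : P₂.PosDef) (hS : S.PosDef)
    (x : Fin d → ℝ) :
    ∃ ω ∈ Set.Icc (0:ℝ) 1, ∃ P ∈ Adm d P₁ P₂ S,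
      Sum.elim x x ⬝ᵥ P⁻¹ *ᵥ Sum.elim x x ≤ hfun d P₁ P₂ S x ω := by
  haveI : Nonempty (Fin d) := ⟨⟨0, hd⟩⟩
  set y : Fin d ⊕ Fin d → ℝ := Sum.elim x x with hy
  rcases eq_or_ne x 0 with rfl | hx
  · refine ⟨0, ⟨le_refl _, zero_le_one⟩, _, adm_blockdiag_mem hP₁ hP₂, ?_⟩
    rw [hfun_zero]
    simp [hy]
  have hy0 : y ≠ 0 := by
    intro h
    exact hx (funext fun i => congrFun h (Sum.inl i))
  -- the concave objective χ
  set χ : ((Fin d ⊕ Fin d) → ℝ) → ℝ := fun z =>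
    2 * (z ⬝ᵥ y) - z ⬝ᵥ S *ᵥ z
      - (Real.sqrt ((z ∘ Sum.inl) ⬝ᵥ P₁ *ᵥ (z ∘ Sum.inl))
          + Real.sqrt ((z ∘ Sum.inr) ⬝ᵥ P₂ *ᵥ (z ∘ Sum.inr))) ^ 2 with hχdef
  have hχelim : ∀ u v, χ (Sum.elim u v)
      = 2 * (u ⬝ᵥ x) + 2 * (v ⬝ᵥ x) - Sum.elim u v ⬝ᵥ S *ᵥ Sum.elim u v
        - (Real.sqrt (u ⬝ᵥ P₁ *ᵥ u) + Real.sqrt (v ⬝ᵥ P₂ *ᵥ v)) ^ 2 := by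
    intro u v
    rw [hχdef]
    simp only [Sum.elim_comp_inl, Sum.elim_comp_inr]
    rw [hy, elim_dp_elim]
    ring
  have hcont : Continuous χ := by
    have hres1 : Continuous fun z : (Fin d ⊕ Fin d) → ℝ => z ∘ Sum.inl :=
      continuous_pi fun i => continuous_apply _
    have hres2 : Continuous fun z : (Fin d ⊕ Fin d) → ℝ => z ∘ Sum.inr :=
      continuous_pi fun i => continuous_apply _
    exact ((continuous_const.mul (continuous_dp y)).sub (continuous_quad S)).sub
      (((Real.continuous_sqrt.comp ((continuous_quad P₁).comp hres1)).add
        (Real.continuous_sqrt.comp ((continuous_quad P₂).comp hres2))).pow 2)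
  have hbound : ∀ z, χ z ≤ 2 * (z ⬝ᵥ y) - z ⬝ᵥ S *ᵥ z := by
    intro z
    rw [hχdef]
    simp only
    nlinarith [sq_nonneg (Real.sqrt ((z ∘ Sum.inl) ⬝ᵥ P₁ *ᵥ (z ∘ Sum.inl))
      + Real.sqrt ((z ∘ Sum.inr) ⬝ᵥ P₂ *ᵥ (z ∘ Sum.inr)))]
  have hχ0 : χ 0 = 0 := by
    rw [hχdef]
    simp only [zero_dotProduct, mulVec_zero, dotProduct_zero]
    have h0c : (0 : (Fin d ⊕ Fin d) → ℝ) ∘ Sum.inl = 0 := rfl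
    have h0c' : (0 : (Fin d ⊕ Fin d) → ℝ) ∘ Sum.inr = 0 := rfl
    rw [h0c, h0c']
    simp
  obtain ⟨z, hzmax⟩ := exists_global_max hcont hS y hbound hχ0
  set z₁ : Fin d → ℝ := z ∘ Sum.inl with hz₁
  set z₂ : Fin d → ℝ := z ∘ Sum.inr with hz₂
  have hElim : Sum.elim z₁ z₂ = z := Sum.elim_comp_inl_inr z
  set a2 : ℝ := z₁ ⬝ᵥ P₁ *ᵥ z₁ with ha2def
  set b2 : ℝ := z₂ ⬝ᵥ P₂ *ᵥ z₂ with hb2def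
  have ha2nn : 0 ≤ a2 := psd_nonneg hP₁.posSemidef z₁
  have hb2nn : 0 ≤ b2 := psd_nonneg hP₂.posSemidef z₂
  set a : ℝ := Real.sqrt a2 with hadef
  set b : ℝ := Real.sqrt b2 with hbdef
  have ha2 : a ^ 2 = a2 := Real.sq_sqrt ha2nn
  have hb2 : b ^ 2 = b2 := Real.sq_sqrt hb2nn
  have han : 0 ≤ a := Real.sqrt_nonneg _
  have hbn : 0 ≤ b := Real.sqrt_nonneg _
  have hχz : χ z = 2 * (z ⬝ᵥ y) - z ⬝ᵥ S *ᵥ z - (a + b) ^ 2 := by rw [hχdef]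
  -- not both a2 and b2 vanish
  have hnboth : ¬(a2 = 0 ∧ b2 = 0) := by
    rintro ⟨h1, h2⟩
    have hz1 : z₁ = 0 := pd_quad_zero hP₁ h1
    have hz2 : z₂ = 0 := pd_quad_zero hP₂ h2
    have hz0 : z = 0 := by
      rw [← hElim, hz1, hz2]
      funext i; cases i <;> rfl
    -- construct a positive value of χ
    set q : ℝ := y ⬝ᵥ S *ᵥ y
      + (Real.sqrt ((y ∘ Sum.inl) ⬝ᵥ P₁ *ᵥ (y ∘ Sum.inl))
          + Real.sqrt ((y ∘ Sum.inr) ⬝ᵥ P₂ *ᵥ (y ∘ Sum.inr))) ^ 2 with hqdef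
    have hqpos : 0 < q := by
      have := pd_pos hS hy0
      nlinarith [sq_nonneg (Real.sqrt ((y ∘ Sum.inl) ⬝ᵥ P₁ *ᵥ (y ∘ Sum.inl))
        + Real.sqrt ((y ∘ Sum.inr) ⬝ᵥ P₂ *ᵥ (y ∘ Sum.inr)))]
    have hyy : 0 < y ⬝ᵥ y := dp_self_pos hy0
    set c : ℝ := (y ⬝ᵥ y) / q with hcdef
    have hcpos : 0 < c := div_pos hyy hqpos
    have hχc : χ (c • y) = 2 * c * (y ⬝ᵥ y) - c ^ 2 * q := by
      rw [hχdef]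
      simp only
      have e1 : (c • y) ⬝ᵥ y = c * (y ⬝ᵥ y) := by
        rw [smul_dotProduct]; simp
      have e2 : (c • y) ⬝ᵥ S *ᵥ (c • y) = c ^ 2 * (y ⬝ᵥ S *ᵥ y) := by
        rw [smul_dotProduct, mulVec_smul, dotProduct_smul, smul_eq_mul, smul_eq_mul]; ring
      have e3 : ∀ (A : Matrix (Fin d) (Fin d) ℝ) (u : Fin d → ℝ),
          Real.sqrt ((c • u) ⬝ᵥ A *ᵥ (c • u)) = c * Real.sqrt (u ⬝ᵥ A *ᵥ u) := by
        intro A u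
        rw [smul_dotProduct, mulVec_smul, dotProduct_smul, smul_eq_mul, smul_eq_mul,
          ← mul_assoc, show c * c = c ^ 2 by ring, Real.sqrt_mul (sq_nonneg c),
          Real.sqrt_sq hcpos.le]
      have e4 : (c • y) ∘ Sum.inl = c • (y ∘ Sum.inl) := rfl
      have e5 : (c • y) ∘ Sum.inr = c • (y ∘ Sum.inr) := rfl
      rw [e1, e2, e4, e5, e3, e3, hqdef]
      ring
    have hcq : c * q = y ⬝ᵥ y := by
      rw [hcdef]; field_simp
    have hpos : 0 < χ (c • y) := by
      rw [hχc]
      have : 2 * c * (y ⬝ᵥ y) - c ^ 2 * q = c * (y ⬝ᵥ y) + c * ((y ⬝ᵥ y) - c * q) := by ring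
      rw [this, hcq]
      simp
      positivity
    have := hzmax (c • y)
    rw [hz0, hχ0] at this
    linarith
  by_cases hb20 : b2 = 0
  · -- boundary case ω = 1
    have ha20 : a2 ≠ 0 := fun h => hnboth ⟨h, hb20⟩
    have ha2pos : 0 < a2 := lt_of_le_of_ne ha2nn (Ne.symm ha20)
    have hapos : 0 < a := Real.sqrt_pos.mpr ha2pos
    have hz₂0 : z₂ = 0 := pd_quad_zero hP₂ (by rw [← hb2def]; exact hb20)
    have hb0 : b = 0 := by rw [hbdef, hb20, Real.sqrt_zero]
    set A₁ := P₁ + S.toBlocks₁₁ with hA₁def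
    have hA₁d : A₁.PosDef := hP₁.add (posDef_toBlocks₁₁ hS)
    have hzy : z ⬝ᵥ y = z₁ ⬝ᵥ x := by
      rw [← hElim, hy, elim_dp_elim, hz₂0, zero_dotProduct, add_zero]
    have hzS : z ⬝ᵥ S *ᵥ z = z₁ ⬝ᵥ S.toBlocks₁₁ *ᵥ z₁ := by
      rw [← hElim, hz₂0, dp_toBlocks₁₁]
    have hχz1 : χ z = 2 * (z₁ ⬝ᵥ x) - z₁ ⬝ᵥ A₁ *ᵥ z₁ := by
      rw [hχz, hzy, hzS, hb0, add_zero, ha2, hA₁def, add_mulVec, dotProduct_add, ha2def]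
      ring
    have hle : χ z ≤ x ⬝ᵥ A₁⁻¹ *ᵥ x := by
      rw [hχz1]; exact quad_le_inv hA₁d x z₁
    have hge : x ⬝ᵥ A₁⁻¹ *ᵥ x ≤ χ z := by
      set w := A₁⁻¹ *ᵥ x with hwdef
      have hAw : A₁ *ᵥ w = x := pd_mulVec_inv hA₁d x
      have heqw : 2 * (w ⬝ᵥ x) - w ⬝ᵥ A₁ *ᵥ w = x ⬝ᵥ A₁⁻¹ *ᵥ x := quad_eq_inv hA₁d hAw
      have hχw : χ (Sum.elim w 0) = 2 * (w ⬝ᵥ x) - w ⬝ᵥ A₁ *ᵥ w := by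
        rw [hχelim, dp_toBlocks₁₁, zero_dotProduct,
          show (0 : Fin d → ℝ) ⬝ᵥ P₂ *ᵥ (0 : Fin d → ℝ) = 0 from zero_dotProduct _,
          Real.sqrt_zero, add_zero, Real.sq_sqrt (psd_nonneg hP₁.posSemidef w),
          hA₁def, add_mulVec, dotProduct_add]
        ring
      calc x ⬝ᵥ A₁⁻¹ *ᵥ x = χ (Sum.elim w 0) := by rw [hχw, heqw]
      _ ≤ χ z := hzmax _
    have heqA : 2 * (z₁ ⬝ᵥ x) - z₁ ⬝ᵥ A₁ *ᵥ z₁ = x ⬝ᵥ A₁⁻¹ *ᵥ x := by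
      rw [← hχz1]; linarith
    have hA₁z : A₁ *ᵥ z₁ = x := quad_eq_iff hA₁d heqA
    -- perturbation in the second block
    set r : Fin d → ℝ := x - S.toBlocks₂₁ *ᵥ z₁ with hrdef
    set w₂ : Fin d → ℝ := P₂⁻¹ *ᵥ r with hw₂def
    have hP₂w : P₂ *ᵥ w₂ = r := pd_mulVec_inv hP₂ r
    set β2 : ℝ := w₂ ⬝ᵥ P₂ *ᵥ w₂ with hβ2def
    have hβ2nn : 0 ≤ β2 := psd_nonneg hP₂.posSemidef w₂
    set βr : ℝ := Real.sqrt β2 with hβrdef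
    have hβr2 : βr ^ 2 = β2 := Real.sq_sqrt hβ2nn
    have hβrnn : 0 ≤ βr := Real.sqrt_nonneg _
    have hC : 0 ≤ w₂ ⬝ᵥ S.toBlocks₂₂ *ᵥ w₂ + β2 :=
      add_nonneg (psd_nonneg (posDef_toBlocks₂₂ hS).posSemidef w₂) hβ2nn
    have hpert : ∀ ε : ℝ, 0 < ε →
        2 * ε * (w₂ ⬝ᵥ r - a * βr) ≤ ε ^ 2 * (w₂ ⬝ᵥ S.toBlocks₂₂ *ᵥ w₂ + β2) := by
      intro ε hε
      have hεle := hzmax (Sum.elim z₁ (ε • w₂))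
      rw [hχelim] at hεle
      have hS12 : z₁ ⬝ᵥ S.toBlocks₁₂ *ᵥ (ε • w₂) = ε * (w₂ ⬝ᵥ S.toBlocks₂₁ *ᵥ z₁) := by
        rw [mulVec_smul, dotProduct_smul, smul_eq_mul, dp_transpose, toBlocks₁₂_transpose hS.1]
      have hS21 : (ε • w₂) ⬝ᵥ S.toBlocks₂₁ *ᵥ z₁ = ε * (w₂ ⬝ᵥ S.toBlocks₂₁ *ᵥ z₁) := by
        rw [smul_dotProduct, smul_eq_mul]
      have hS22 : (ε • w₂) ⬝ᵥ S.toBlocks₂₂ *ᵥ (ε • w₂)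
          = ε ^ 2 * (w₂ ⬝ᵥ S.toBlocks₂₂ *ᵥ w₂) := by
        rw [smul_dotProduct, mulVec_smul, dotProduct_smul, smul_eq_mul, smul_eq_mul]; ring
      have hSfull : Sum.elim z₁ (ε • w₂) ⬝ᵥ S *ᵥ Sum.elim z₁ (ε • w₂)
          = z₁ ⬝ᵥ S.toBlocks₁₁ *ᵥ z₁ + 2 * ε * (w₂ ⬝ᵥ S.toBlocks₂₁ *ᵥ z₁)
            + ε ^ 2 * (w₂ ⬝ᵥ S.toBlocks₂₂ *ᵥ w₂) := by
        rw [dp_blocks, hS12, hS21, hS22]; ring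
      have hq2 : (ε • w₂) ⬝ᵥ P₂ *ᵥ (ε • w₂) = ε ^ 2 * β2 := by
        rw [smul_dotProduct, mulVec_smul, dotProduct_smul, smul_eq_mul, smul_eq_mul,
          ← hβ2def]
        ring
      have hsqP2 : Real.sqrt ((ε • w₂) ⬝ᵥ P₂ *ᵥ (ε • w₂)) = ε * βr := by
        rw [hq2, Real.sqrt_mul (sq_nonneg ε), Real.sqrt_sq hε.le, hβrdef]
      have hsqx : (ε • w₂) ⬝ᵥ x = ε * (w₂ ⬝ᵥ x) := by rw [smul_dotProduct, smul_eq_mul]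
      have haP₁ : Real.sqrt (z₁ ⬝ᵥ P₁ *ᵥ z₁) = a := by rw [← ha2def, ← hadef]
      rw [hSfull, hsqP2, hsqx, haP₁, hχz1] at hεle
      have hA₁q : z₁ ⬝ᵥ A₁ *ᵥ z₁ = z₁ ⬝ᵥ P₁ *ᵥ z₁ + z₁ ⬝ᵥ S.toBlocks₁₁ *ᵥ z₁ := by
        rw [hA₁def, add_mulVec, dotProduct_add]
      rw [hA₁q] at hεle
      have hexp2 : (a + ε * βr) ^ 2 = a ^ 2 + 2 * ε * a * βr + ε ^ 2 * βr ^ 2 := by ring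
      rw [hexp2] at hεle
      have ha2' : a ^ 2 = z₁ ⬝ᵥ P₁ *ᵥ z₁ := by rw [ha2, ha2def]
      have hwrε : ε * (w₂ ⬝ᵥ x) - ε * (w₂ ⬝ᵥ S.toBlocks₂₁ *ᵥ z₁) = ε * (w₂ ⬝ᵥ r) := by
        rw [← mul_sub, hrdef, dotProduct_sub]
      rw [hβr2] at hεle
      linarith [hεle, hwrε, ha2']
    have hcle : w₂ ⬝ᵥ r - a * βr ≤ 0 := eps_le_zero hC hpert
    have hwrβ : w₂ ⬝ᵥ r = β2 := by rw [← hP₂w, hβ2def]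
    have hβa : βr ≤ a := by
      rcases eq_or_lt_of_le hβrnn with h0 | hpos'
    -- h0 : 0 = βr
      · rw [← h0]; exact han
      · nlinarith [hcle, hwrβ, hβr2]
    -- construction of the admissible matrix
    set Q21 : Matrix (Fin d) (Fin d) ℝ := a2⁻¹ • vecMulVec r (P₁ *ᵥ z₁) with hQ21
    set Q : Matrix (Fin d ⊕ Fin d) (Fin d ⊕ Fin d) ℝ := Matrix.fromBlocks P₁ Q21ᵀ Q21 P₂
      with hQdef
    have hQ21T : Q21ᵀ = a2⁻¹ • vecMulVec (P₁ *ᵥ z₁) r := by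
      rw [hQ21, transpose_smul, transpose_vecMulVec]
    have hQherm : Q.IsHermitian := by
      rw [hQdef]
      refine IsHermitian.fromBlocks hP₁.1 ?_ hP₂.1
      rw [conjTranspose_eq_transpose_of_trivial, transpose_transpose]
    have hQpsd : Q.PosSemidef := by
      refine PosSemidef.of_dotProduct_mulVec_nonneg hQherm fun v => ?_
      rw [show star v = v from star_trivial v, ← Sum.elim_comp_inl_inr v, dp_blocks]
      have ht11 : Q.toBlocks₁₁ = P₁ := by rw [hQdef]; exact toBlocks_fromBlocks₁₁ _ _ _ _
      have ht12 : Q.toBlocks₁₂ = Q21ᵀ := by rw [hQdef]; exact toBlocks_fromBlocks₁₂ _ _ _ _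
      have ht21 : Q.toBlocks₂₁ = Q21 := by rw [hQdef]; exact toBlocks_fromBlocks₂₁ _ _ _ _
      have ht22 : Q.toBlocks₂₂ = P₂ := by rw [hQdef]; exact toBlocks_fromBlocks₂₂ _ _ _ _
      rw [ht11, ht12, ht21, ht22]
      set v₁ := v ∘ Sum.inl with hv₁
      set v₂ := v ∘ Sum.inr with hv₂
      set α := v₁ ⬝ᵥ P₁ *ᵥ z₁ with hα
      set γ := v₂ ⬝ᵥ r with hγ
      have hcross1 : v₁ ⬝ᵥ Q21ᵀ *ᵥ v₂ = a2⁻¹ * (γ * α) := by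
        rw [hQ21T, smul_mulVec, vecMulVec_mulVec, dotProduct_smul, dotProduct_smul,
          smul_eq_mul, smul_eq_mul, hα, hγ, dotProduct_comm r v₂]
      have hcross2 : v₂ ⬝ᵥ Q21 *ᵥ v₁ = a2⁻¹ * (α * γ) := by
        rw [hQ21, smul_mulVec, vecMulVec_mulVec, dotProduct_smul, dotProduct_smul,
          smul_eq_mul, smul_eq_mul, hα, hγ, dotProduct_comm (P₁ *ᵥ z₁) v₁]
      rw [hcross1, hcross2]
      set p := v₁ ⬝ᵥ P₁ *ᵥ v₁ with hp
      set q := v₂ ⬝ᵥ P₂ *ᵥ v₂ with hq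
      have hpnn : 0 ≤ p := psd_nonneg hP₁.posSemidef v₁
      have hqnn : 0 ≤ q := psd_nonneg hP₂.posSemidef v₂
      have hCSα : α ^ 2 ≤ p * a2 := psd_cauchy_schwarz hP₁.posSemidef v₁ z₁
      have hCSγ : γ ^ 2 ≤ q * β2 := by
        have h := psd_cauchy_schwarz hP₂.posSemidef v₂ w₂
        rw [← hβ2def, ← hq] at h
        have h2 : γ = v₂ ⬝ᵥ P₂ *ᵥ w₂ := by rw [hγ, ← hP₂w]
        rw [← h2] at h
        exact h
      set sp := Real.sqrt p with hspdef
      set sq := Real.sqrt q with hsqdef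
      have hsp : sp ^ 2 = p := Real.sq_sqrt hpnn
      have hsq : sq ^ 2 = q := Real.sq_sqrt hqnn
      have hspnn : 0 ≤ sp := Real.sqrt_nonneg _
      have hsqnn : 0 ≤ sq := Real.sqrt_nonneg _
      have habsα : |α| ≤ sp * a := by
        rw [← Real.sqrt_sq_eq_abs]
        calc Real.sqrt (α ^ 2) ≤ Real.sqrt (p * a2) := Real.sqrt_le_sqrt hCSα
        _ = Real.sqrt p * Real.sqrt a2 := Real.sqrt_mul hpnn _
        _ = sp * a := by rw [← hadef, hspdef]
      have habsγ : |γ| ≤ sq * βr := by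
        rw [← Real.sqrt_sq_eq_abs]
        calc Real.sqrt (γ ^ 2) ≤ Real.sqrt (q * β2) := Real.sqrt_le_sqrt hCSγ
        _ = Real.sqrt q * Real.sqrt β2 := Real.sqrt_mul hqnn _
        _ = sq * βr := by rw [← hβrdef, hsqdef]
      have hprod : |α * γ| ≤ (sp * a) * (sq * βr) := by
        rw [abs_mul]
        exact mul_le_mul habsα habsγ (abs_nonneg _) (by positivity)
      have hlow : -((sp * a) * (sq * βr)) ≤ α * γ := by
        have := neg_abs_le (α * γ)
        linarith
      have hmono : (sp * a) * (sq * βr) ≤ (sp * a) * (sq * a) := by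
        apply mul_le_mul_of_nonneg_left _ (by positivity : (0:ℝ) ≤ sp * a)
        exact mul_le_mul_of_nonneg_left hβa hsqnn
      have hs : 0 ≤ a2 * p + 2 * (α * γ) + a2 * q := by
        have key : a2 * p + a2 * q - 2 * ((sp * a) * (sq * a)) = a2 * (sp - sq) ^ 2 := by
          rw [← hsp, ← hsq, ← ha2]; ring
        have key2 : 0 ≤ a2 * (sp - sq) ^ 2 := mul_nonneg ha2nn (sq_nonneg _)
        linarith
      have hrw : p + a2⁻¹ * (γ * α) + a2⁻¹ * (α * γ) + q
          = a2⁻¹ * (a2 * p + 2 * (α * γ) + a2 * q) := by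
        field_simp
        ring
      rw [hrw]
      exact mul_nonneg (inv_nonneg.mpr ha2nn) hs
    have hQz : (Q + S) *ᵥ Sum.elim z₁ (0 : Fin d → ℝ) = y := by
      rw [add_mulVec]
      have h1 : Q *ᵥ Sum.elim z₁ (0 : Fin d → ℝ) = Sum.elim (P₁ *ᵥ z₁) r := by
        rw [hQdef, fromBlocks_mulVec, Sum.elim_comp_inl, Sum.elim_comp_inr,
          mulVec_zero, mulVec_zero, add_zero, add_zero]
        congr 1
        rw [hQ21, smul_mulVec, vecMulVec_mulVec, smul_smul,
          dotProduct_comm (P₁ *ᵥ z₁) z₁, ← ha2def, inv_mul_cancel₀ ha20, one_smul]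
      have h2 : S *ᵥ Sum.elim z₁ (0 : Fin d → ℝ)
          = Sum.elim (S.toBlocks₁₁ *ᵥ z₁) (S.toBlocks₂₁ *ᵥ z₁) := by
        conv_lhs => rw [← fromBlocks_toBlocks S]
        rw [fromBlocks_mulVec, Sum.elim_comp_inl, Sum.elim_comp_inr,
          mulVec_zero, mulVec_zero, add_zero, add_zero]
      rw [h1, h2, elim_add, hy,
        show P₁ *ᵥ z₁ + S.toBlocks₁₁ *ᵥ z₁ = x by rw [← add_mulVec, ← hA₁def, hA₁z],
        show r + S.toBlocks₂₁ *ᵥ z₁ = x by rw [hrdef]; exact sub_add_cancel x _]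
    have hPd : (Q + S).PosDef := Matrix.PosDef.posSemidef_add hQpsd hS
    have hinv : (Q + S)⁻¹ *ᵥ y = Sum.elim z₁ (0 : Fin d → ℝ) := by
      rw [← hQz, pd_inv_mulVec hPd]
    refine ⟨1, ⟨zero_le_one, le_refl 1⟩, Q + S,
      ⟨Q, hQpsd, by rw [hQdef]; exact toBlocks_fromBlocks₁₁ _ _ _ _,
        by rw [hQdef]; exact toBlocks_fromBlocks₂₂ _ _ _ _, rfl⟩, ?_⟩
    have hA₁x : A₁⁻¹ *ᵥ x = z₁ := by rw [← hA₁z, pd_inv_mulVec hA₁d]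
    rw [hfun_one, hinv, hy, elim_dp_elim, dotProduct_zero, add_zero, hA₁x]

  by_cases ha20 : a2 = 0
  · -- boundary case ω = 0
    have hb2pos : 0 < b2 := lt_of_le_of_ne hb2nn (Ne.symm hb20)
    have hbpos : 0 < b := Real.sqrt_pos.mpr hb2pos
    have hz₁0 : z₁ = 0 := pd_quad_zero hP₁ (by rw [← ha2def]; exact ha20)
    have ha0 : a = 0 := by rw [hadef, ha20, Real.sqrt_zero]
    set A₂ := P₂ + S.toBlocks₂₂ with hA₂def
    have hA₂d : A₂.PosDef := hP₂.add (posDef_toBlocks₂₂ hS)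
    have hzy : z ⬝ᵥ y = z₂ ⬝ᵥ x := by
      rw [← hElim, hy, elim_dp_elim, hz₁0, zero_dotProduct, zero_add]
    have hzS : z ⬝ᵥ S *ᵥ z = z₂ ⬝ᵥ S.toBlocks₂₂ *ᵥ z₂ := by
      rw [← hElim, hz₁0, dp_toBlocks₂₂]
    have hχz1 : χ z = 2 * (z₂ ⬝ᵥ x) - z₂ ⬝ᵥ A₂ *ᵥ z₂ := by
      rw [hχz, hzy, hzS, ha0, zero_add, hb2, hA₂def, add_mulVec, dotProduct_add, hb2def]
      ring
    have hle : χ z ≤ x ⬝ᵥ A₂⁻¹ *ᵥ x := by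
      rw [hχz1]; exact quad_le_inv hA₂d x z₂
    have hge : x ⬝ᵥ A₂⁻¹ *ᵥ x ≤ χ z := by
      set w := A₂⁻¹ *ᵥ x with hwdef
      have hAw : A₂ *ᵥ w = x := pd_mulVec_inv hA₂d x
      have heqw : 2 * (w ⬝ᵥ x) - w ⬝ᵥ A₂ *ᵥ w = x ⬝ᵥ A₂⁻¹ *ᵥ x := quad_eq_inv hA₂d hAw
      have hχw : χ (Sum.elim (0 : Fin d → ℝ) w) = 2 * (w ⬝ᵥ x) - w ⬝ᵥ A₂ *ᵥ w := by
        rw [hχelim, dp_toBlocks₂₂, zero_dotProduct,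
          show (0 : Fin d → ℝ) ⬝ᵥ P₁ *ᵥ (0 : Fin d → ℝ) = 0 from zero_dotProduct _,
          Real.sqrt_zero, zero_add, Real.sq_sqrt (psd_nonneg hP₂.posSemidef w),
          hA₂def, add_mulVec, dotProduct_add]
        ring
      calc x ⬝ᵥ A₂⁻¹ *ᵥ x = χ (Sum.elim (0 : Fin d → ℝ) w) := by rw [hχw, heqw]
      _ ≤ χ z := hzmax _
    have heqA : 2 * (z₂ ⬝ᵥ x) - z₂ ⬝ᵥ A₂ *ᵥ z₂ = x ⬝ᵥ A₂⁻¹ *ᵥ x := by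
      rw [← hχz1]; linarith
    have hA₂z : A₂ *ᵥ z₂ = x := quad_eq_iff hA₂d heqA
    -- perturbation in the first block
    set r : Fin d → ℝ := x - S.toBlocks₁₂ *ᵥ z₂ with hrdef
    set w₁ : Fin d → ℝ := P₁⁻¹ *ᵥ r with hw₁def
    have hP₁w : P₁ *ᵥ w₁ = r := pd_mulVec_inv hP₁ r
    set β2 : ℝ := w₁ ⬝ᵥ P₁ *ᵥ w₁ with hβ2def
    have hβ2nn : 0 ≤ β2 := psd_nonneg hP₁.posSemidef w₁
    set βr : ℝ := Real.sqrt β2 with hβrdef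
    have hβr2 : βr ^ 2 = β2 := Real.sq_sqrt hβ2nn
    have hβrnn : 0 ≤ βr := Real.sqrt_nonneg _
    have hC : 0 ≤ w₁ ⬝ᵥ S.toBlocks₁₁ *ᵥ w₁ + β2 :=
      add_nonneg (psd_nonneg (posDef_toBlocks₁₁ hS).posSemidef w₁) hβ2nn
    have hS21T : S.toBlocks₂₁ᵀ = S.toBlocks₁₂ := by
      rw [← toBlocks₁₂_transpose hS.1, transpose_transpose]
    have hpert : ∀ ε : ℝ, 0 < ε →
        2 * ε * (w₁ ⬝ᵥ r - b * βr) ≤ ε ^ 2 * (w₁ ⬝ᵥ S.toBlocks₁₁ *ᵥ w₁ + β2) := by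
      intro ε hε
      have hεle := hzmax (Sum.elim (ε • w₁) z₂)
      rw [hχelim] at hεle
      have hS12 : (ε • w₁) ⬝ᵥ S.toBlocks₁₂ *ᵥ z₂ = ε * (w₁ ⬝ᵥ S.toBlocks₁₂ *ᵥ z₂) := by
        rw [smul_dotProduct, smul_eq_mul]
      have hS21 : z₂ ⬝ᵥ S.toBlocks₂₁ *ᵥ (ε • w₁) = ε * (w₁ ⬝ᵥ S.toBlocks₁₂ *ᵥ z₂) := by
        rw [mulVec_smul, dotProduct_smul, smul_eq_mul, dp_transpose, hS21T]
      have hS11 : (ε • w₁) ⬝ᵥ S.toBlocks₁₁ *ᵥ (ε • w₁)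
          = ε ^ 2 * (w₁ ⬝ᵥ S.toBlocks₁₁ *ᵥ w₁) := by
        rw [smul_dotProduct, mulVec_smul, dotProduct_smul, smul_eq_mul, smul_eq_mul]; ring
      have hSfull : Sum.elim (ε • w₁) z₂ ⬝ᵥ S *ᵥ Sum.elim (ε • w₁) z₂
          = ε ^ 2 * (w₁ ⬝ᵥ S.toBlocks₁₁ *ᵥ w₁) + 2 * ε * (w₁ ⬝ᵥ S.toBlocks₁₂ *ᵥ z₂)
            + z₂ ⬝ᵥ S.toBlocks₂₂ *ᵥ z₂ := by
        rw [dp_blocks, hS12, hS21, hS11]; ring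
      have hq2 : (ε • w₁) ⬝ᵥ P₁ *ᵥ (ε • w₁) = ε ^ 2 * β2 := by
        rw [smul_dotProduct, mulVec_smul, dotProduct_smul, smul_eq_mul, smul_eq_mul,
          ← hβ2def]
        ring
      have hsqP1 : Real.sqrt ((ε • w₁) ⬝ᵥ P₁ *ᵥ (ε • w₁)) = ε * βr := by
        rw [hq2, Real.sqrt_mul (sq_nonneg ε), Real.sqrt_sq hε.le, hβrdef]
      have hsqx : (ε • w₁) ⬝ᵥ x = ε * (w₁ ⬝ᵥ x) := by rw [smul_dotProduct, smul_eq_mul]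
      have hbP₂ : Real.sqrt (z₂ ⬝ᵥ P₂ *ᵥ z₂) = b := by rw [← hb2def, ← hbdef]
      rw [hSfull, hsqP1, hsqx, hbP₂, hχz1] at hεle
      have hA₂q : z₂ ⬝ᵥ A₂ *ᵥ z₂ = z₂ ⬝ᵥ P₂ *ᵥ z₂ + z₂ ⬝ᵥ S.toBlocks₂₂ *ᵥ z₂ := by
        rw [hA₂def, add_mulVec, dotProduct_add]
      rw [hA₂q] at hεle
      have hexp2 : (ε * βr + b) ^ 2 = ε ^ 2 * βr ^ 2 + 2 * ε * b * βr + b ^ 2 := by ring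
      rw [hexp2] at hεle
      have hb2' : b ^ 2 = z₂ ⬝ᵥ P₂ *ᵥ z₂ := by rw [hb2, hb2def]
      have hwrε : ε * (w₁ ⬝ᵥ x) - ε * (w₁ ⬝ᵥ S.toBlocks₁₂ *ᵥ z₂) = ε * (w₁ ⬝ᵥ r) := by
        rw [← mul_sub, hrdef, dotProduct_sub]
      rw [hβr2] at hεle
      linarith [hεle, hwrε, hb2']
    have hcle : w₁ ⬝ᵥ r - b * βr ≤ 0 := eps_le_zero hC hpert
    have hwrβ : w₁ ⬝ᵥ r = β2 := by rw [← hP₁w, hβ2def]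
    have hβb : βr ≤ b := by
      rcases eq_or_lt_of_le hβrnn with h0 | hpos'
      · rw [← h0]; exact hbn
      · nlinarith [hcle, hwrβ, hβr2]
    -- construction of the admissible matrix
    set Q12 : Matrix (Fin d) (Fin d) ℝ := b2⁻¹ • vecMulVec r (P₂ *ᵥ z₂) with hQ12
    set Q : Matrix (Fin d ⊕ Fin d) (Fin d ⊕ Fin d) ℝ := Matrix.fromBlocks P₁ Q12 Q12ᵀ P₂
      with hQdef
    have hQ12T : Q12ᵀ = b2⁻¹ • vecMulVec (P₂ *ᵥ z₂) r := by
      rw [hQ12, transpose_smul, transpose_vecMulVec]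
    have hQherm : Q.IsHermitian := by
      rw [hQdef]
      refine IsHermitian.fromBlocks hP₁.1 ?_ hP₂.1
      rw [conjTranspose_eq_transpose_of_trivial]
    have hQpsd : Q.PosSemidef := by
      refine PosSemidef.of_dotProduct_mulVec_nonneg hQherm fun v => ?_
      rw [show star v = v from star_trivial v, ← Sum.elim_comp_inl_inr v, dp_blocks]
      have ht11 : Q.toBlocks₁₁ = P₁ := by rw [hQdef]; exact toBlocks_fromBlocks₁₁ _ _ _ _
      have ht12 : Q.toBlocks₁₂ = Q12 := by rw [hQdef]; exact toBlocks_fromBlocks₁₂ _ _ _ _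
      have ht21 : Q.toBlocks₂₁ = Q12ᵀ := by rw [hQdef]; exact toBlocks_fromBlocks₂₁ _ _ _ _
      have ht22 : Q.toBlocks₂₂ = P₂ := by rw [hQdef]; exact toBlocks_fromBlocks₂₂ _ _ _ _
      rw [ht11, ht12, ht21, ht22]
      set v₁ := v ∘ Sum.inl with hv₁
      set v₂ := v ∘ Sum.inr with hv₂
      set α := v₁ ⬝ᵥ r with hα
      set γ := v₂ ⬝ᵥ P₂ *ᵥ z₂ with hγ
      have hcross1 : v₁ ⬝ᵥ Q12 *ᵥ v₂ = b2⁻¹ * (γ * α) := by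
        rw [hQ12, smul_mulVec, vecMulVec_mulVec, dotProduct_smul, dotProduct_smul,
          smul_eq_mul, smul_eq_mul, hα, hγ, dotProduct_comm (P₂ *ᵥ z₂) v₂]
      have hcross2 : v₂ ⬝ᵥ Q12ᵀ *ᵥ v₁ = b2⁻¹ * (α * γ) := by
        rw [hQ12T, smul_mulVec, vecMulVec_mulVec, dotProduct_smul, dotProduct_smul,
          smul_eq_mul, smul_eq_mul, hα, hγ, dotProduct_comm r v₁]
      rw [hcross1, hcross2]
      set p := v₁ ⬝ᵥ P₁ *ᵥ v₁ with hp
      set q := v₂ ⬝ᵥ P₂ *ᵥ v₂ with hq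
      have hpnn : 0 ≤ p := psd_nonneg hP₁.posSemidef v₁
      have hqnn : 0 ≤ q := psd_nonneg hP₂.posSemidef v₂
      have hCSγ : γ ^ 2 ≤ q * b2 := psd_cauchy_schwarz hP₂.posSemidef v₂ z₂
      have hCSα : α ^ 2 ≤ p * β2 := by
        have h := psd_cauchy_schwarz hP₁.posSemidef v₁ w₁
        rw [← hβ2def, ← hp] at h
        have h2 : α = v₁ ⬝ᵥ P₁ *ᵥ w₁ := by rw [hα, ← hP₁w]
        rw [← h2] at h
        exact h
      set sp := Real.sqrt p with hspdef
      set sq := Real.sqrt q with hsqdef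
      have hsp : sp ^ 2 = p := Real.sq_sqrt hpnn
      have hsq : sq ^ 2 = q := Real.sq_sqrt hqnn
      have hspnn : 0 ≤ sp := Real.sqrt_nonneg _
      have hsqnn : 0 ≤ sq := Real.sqrt_nonneg _
      have habsα : |α| ≤ sp * βr := by
        rw [← Real.sqrt_sq_eq_abs]
        calc Real.sqrt (α ^ 2) ≤ Real.sqrt (p * β2) := Real.sqrt_le_sqrt hCSα
        _ = Real.sqrt p * Real.sqrt β2 := Real.sqrt_mul hpnn _
        _ = sp * βr := by rw [← hβrdef, hspdef]
      have habsγ : |γ| ≤ sq * b := by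
        rw [← Real.sqrt_sq_eq_abs]
        calc Real.sqrt (γ ^ 2) ≤ Real.sqrt (q * b2) := Real.sqrt_le_sqrt hCSγ
        _ = Real.sqrt q * Real.sqrt b2 := Real.sqrt_mul hqnn _
        _ = sq * b := by rw [← hbdef, hsqdef]
      have hprod : |α * γ| ≤ (sp * βr) * (sq * b) := by
        rw [abs_mul]
        exact mul_le_mul habsα habsγ (abs_nonneg _) (by positivity)
      have hlow : -((sp * βr) * (sq * b)) ≤ α * γ := by
        have := neg_abs_le (α * γ)
        linarith
      have hmono : (sp * βr) * (sq * b) ≤ (sp * b) * (sq * b) := by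
        apply mul_le_mul_of_nonneg_right _ (by positivity : (0:ℝ) ≤ sq * b)
        exact mul_le_mul_of_nonneg_left hβb hspnn
      have hs : 0 ≤ b2 * p + 2 * (α * γ) + b2 * q := by
        have key : b2 * p + b2 * q - 2 * ((sp * b) * (sq * b)) = b2 * (sp - sq) ^ 2 := by
          rw [← hsp, ← hsq, ← hb2]; ring
        have key2 : 0 ≤ b2 * (sp - sq) ^ 2 := mul_nonneg hb2nn (sq_nonneg _)
        linarith
      have hrw : p + b2⁻¹ * (γ * α) + b2⁻¹ * (α * γ) + q
          = b2⁻¹ * (b2 * p + 2 * (α * γ) + b2 * q) := by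
        field_simp
        ring
      rw [hrw]
      exact mul_nonneg (inv_nonneg.mpr hb2nn) hs
    have hQz : (Q + S) *ᵥ Sum.elim (0 : Fin d → ℝ) z₂ = y := by
      rw [add_mulVec]
      have h1 : Q *ᵥ Sum.elim (0 : Fin d → ℝ) z₂ = Sum.elim r (P₂ *ᵥ z₂) := by
        rw [hQdef, fromBlocks_mulVec, Sum.elim_comp_inl, Sum.elim_comp_inr,
          mulVec_zero, mulVec_zero, zero_add, zero_add]
        congr 1
        rw [hQ12, smul_mulVec, vecMulVec_mulVec, smul_smul,
          dotProduct_comm (P₂ *ᵥ z₂) z₂, ← hb2def, inv_mul_cancel₀ hb20, one_smul]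
      have h2 : S *ᵥ Sum.elim (0 : Fin d → ℝ) z₂
          = Sum.elim (S.toBlocks₁₂ *ᵥ z₂) (S.toBlocks₂₂ *ᵥ z₂) := by
        conv_lhs => rw [← fromBlocks_toBlocks S]
        rw [fromBlocks_mulVec, Sum.elim_comp_inl, Sum.elim_comp_inr,
          mulVec_zero, mulVec_zero, zero_add, zero_add]
      rw [h1, h2, elim_add, hy,
        show r + S.toBlocks₁₂ *ᵥ z₂ = x by rw [hrdef]; exact sub_add_cancel x _,
        show P₂ *ᵥ z₂ + S.toBlocks₂₂ *ᵥ z₂ = x by rw [← add_mulVec, ← hA₂def, hA₂z]]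
    have hPd : (Q + S).PosDef := Matrix.PosDef.posSemidef_add hQpsd hS
    have hinv : (Q + S)⁻¹ *ᵥ y = Sum.elim (0 : Fin d → ℝ) z₂ := by
      rw [← hQz, pd_inv_mulVec hPd]
    refine ⟨0, ⟨le_refl (0:ℝ), zero_le_one⟩, Q + S,
      ⟨Q, hQpsd, by rw [hQdef]; exact toBlocks_fromBlocks₁₁ _ _ _ _,
        by rw [hQdef]; exact toBlocks_fromBlocks₂₂ _ _ _ _, rfl⟩, ?_⟩
    have hA₂x : A₂⁻¹ *ᵥ x = z₂ := by rw [← hA₂z, pd_inv_mulVec hA₂d]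
    rw [hfun_zero, hinv, hy, elim_dp_elim, dotProduct_zero, zero_add, hA₂x]

  · -- interior case
    have ha2pos : 0 < a2 := lt_of_le_of_ne ha2nn (Ne.symm ha20)
    have hb2pos : 0 < b2 := lt_of_le_of_ne hb2nn (Ne.symm hb20)
    have hapos : 0 < a := Real.sqrt_pos.mpr ha2pos
    have hbpos : 0 < b := Real.sqrt_pos.mpr hb2pos
    have habpos : 0 < a + b := by linarith
    set ω : ℝ := a / (a + b) with hωdef
    have h0 : 0 < ω := div_pos hapos habpos
    have h1 : ω < 1 := (div_lt_one habpos).mpr (by linarith)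
    have hω0 : ω ≠ 0 := h0.ne'
    have hω1 : ω ≠ 1 := h1.ne
    have hBc : (Bc d P₁ P₂ S ω).PosDef := bc_posDef hP₁ hP₂ hS h0 h1
    have hωinv : ω⁻¹ = (a + b) / a := by rw [hωdef, inv_div]
    have h1ω : 1 - ω = b / (a + b) := by rw [hωdef]; field_simp; ring
    have h1ωinv : (1 - ω)⁻¹ = (a + b) / b := by rw [h1ω, inv_div]
    have hkey : ω⁻¹ * a2 + (1 - ω)⁻¹ * b2 = (a + b) ^ 2 := by
      rw [hωinv, h1ωinv, ← ha2, ← hb2]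
      field_simp
    have hzBc : z ⬝ᵥ Bc d P₁ P₂ S ω *ᵥ z
        = ω⁻¹ * a2 + (1 - ω)⁻¹ * b2 + z ⬝ᵥ S *ᵥ z := by
      conv_lhs => rw [← hElim]
      rw [bc_quad, hElim]
    have l1 : χ z = 2 * (z ⬝ᵥ y) - z ⬝ᵥ Bc d P₁ P₂ S ω *ᵥ z := by
      rw [hχz, hzBc, hkey]; ring
    have l2 : 2 * (z ⬝ᵥ y) - z ⬝ᵥ Bc d P₁ P₂ S ω *ᵥ z ≤ y ⬝ᵥ (Bc d P₁ P₂ S ω)⁻¹ *ᵥ y :=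
      quad_le_inv hBc y z
    have l3 : y ⬝ᵥ (Bc d P₁ P₂ S ω)⁻¹ *ᵥ y ≤ χ z := by
      set w := (Bc d P₁ P₂ S ω)⁻¹ *ᵥ y with hwdef
      have hBw : Bc d P₁ P₂ S ω *ᵥ w = y := pd_mulVec_inv hBc y
      have heqw : 2 * (w ⬝ᵥ y) - w ⬝ᵥ Bc d P₁ P₂ S ω *ᵥ w
          = y ⬝ᵥ (Bc d P₁ P₂ S ω)⁻¹ *ᵥ y := quad_eq_inv hBc hBw
      set w₁ := w ∘ Sum.inl with hw₁
      set w₂ := w ∘ Sum.inr with hw₂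
      have hwElim : Sum.elim w₁ w₂ = w := Sum.elim_comp_inl_inr w
      have hwBc : w ⬝ᵥ Bc d P₁ P₂ S ω *ᵥ w
          = ω⁻¹ * (w₁ ⬝ᵥ P₁ *ᵥ w₁) + (1 - ω)⁻¹ * (w₂ ⬝ᵥ P₂ *ᵥ w₂) + w ⬝ᵥ S *ᵥ w := by
        conv_lhs => rw [← hwElim]
        rw [bc_quad, hwElim]
      have hamgm := scalar_amgm (c := Real.sqrt (w₁ ⬝ᵥ P₁ *ᵥ w₁))
        (d := Real.sqrt (w₂ ⬝ᵥ P₂ *ᵥ w₂)) h0 h1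
      rw [Real.sq_sqrt (psd_nonneg hP₁.posSemidef w₁),
        Real.sq_sqrt (psd_nonneg hP₂.posSemidef w₂)] at hamgm
      have hχw : χ w = 2 * (w ⬝ᵥ y) - w ⬝ᵥ S *ᵥ w
          - (Real.sqrt (w₁ ⬝ᵥ P₁ *ᵥ w₁) + Real.sqrt (w₂ ⬝ᵥ P₂ *ᵥ w₂)) ^ 2 := by
        rw [hχdef]
      have hwz : χ w ≤ χ z := hzmax w
      rw [hχw] at hwz
      rw [← heqw, hwBc]
      linarith
    have hfv : hfun d P₁ P₂ S x ω = y ⬝ᵥ (Bc d P₁ P₂ S ω)⁻¹ *ᵥ y := hfun_int x hω0 hω1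
    have heq : 2 * (z ⬝ᵥ y) - z ⬝ᵥ Bc d P₁ P₂ S ω *ᵥ z
        = y ⬝ᵥ (Bc d P₁ P₂ S ω)⁻¹ *ᵥ y := by
      rw [← l1] at l2 ⊢
      rw [l1]
      linarith
    have hBz : Bc d P₁ P₂ S ω *ᵥ z = y := quad_eq_iff hBc heq
    -- construct the optimal admissible matrix
    set Q12 : Matrix (Fin d) (Fin d) ℝ := (a * b)⁻¹ • vecMulVec (P₁ *ᵥ z₁) (P₂ *ᵥ z₂) with hQ12
    set Q : Matrix (Fin d ⊕ Fin d) (Fin d ⊕ Fin d) ℝ := Matrix.fromBlocks P₁ Q12 Q12ᵀ P₂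
      with hQdef
    have habne : (a * b) ≠ 0 := (mul_pos hapos hbpos).ne'
    have hQ12T : Q12ᵀ = (a * b)⁻¹ • vecMulVec (P₂ *ᵥ z₂) (P₁ *ᵥ z₁) := by
      rw [hQ12, transpose_smul, transpose_vecMulVec]
    have hQherm : Q.IsHermitian := by
      rw [hQdef]
      refine IsHermitian.fromBlocks hP₁.1 ?_ hP₂.1
      rw [conjTranspose_eq_transpose_of_trivial]
    have hQpsd : Q.PosSemidef := by
      refine PosSemidef.of_dotProduct_mulVec_nonneg hQherm fun v => ?_
      rw [show star v = v from star_trivial v, ← Sum.elim_comp_inl_inr v, dp_blocks]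
      have ht11 : Q.toBlocks₁₁ = P₁ := by rw [hQdef]; exact toBlocks_fromBlocks₁₁ _ _ _ _
      have ht12 : Q.toBlocks₁₂ = Q12 := by rw [hQdef]; exact toBlocks_fromBlocks₁₂ _ _ _ _
      have ht21 : Q.toBlocks₂₁ = Q12ᵀ := by rw [hQdef]; exact toBlocks_fromBlocks₂₁ _ _ _ _
      have ht22 : Q.toBlocks₂₂ = P₂ := by rw [hQdef]; exact toBlocks_fromBlocks₂₂ _ _ _ _
      rw [ht11, ht12, ht21, ht22]
      set v₁ := v ∘ Sum.inl with hv₁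
      set v₂ := v ∘ Sum.inr with hv₂
      set α := v₁ ⬝ᵥ P₁ *ᵥ z₁ with hα
      set γ := v₂ ⬝ᵥ P₂ *ᵥ z₂ with hγ
      have hcross1 : v₁ ⬝ᵥ Q12 *ᵥ v₂ = (a * b)⁻¹ * (γ * α) := by
        rw [hQ12, smul_mulVec, vecMulVec_mulVec, dotProduct_smul, dotProduct_smul,
          smul_eq_mul, smul_eq_mul, hα, hγ, dotProduct_comm (P₂ *ᵥ z₂) v₂]
      have hcross2 : v₂ ⬝ᵥ Q12ᵀ *ᵥ v₁ = (a * b)⁻¹ * (α * γ) := by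
        rw [hQ12T, smul_mulVec, vecMulVec_mulVec, dotProduct_smul, dotProduct_smul,
          smul_eq_mul, smul_eq_mul, hα, hγ, dotProduct_comm (P₁ *ᵥ z₁) v₁]
      rw [hcross1, hcross2]
      set p := v₁ ⬝ᵥ P₁ *ᵥ v₁ with hp
      set q := v₂ ⬝ᵥ P₂ *ᵥ v₂ with hq
      have hpnn : 0 ≤ p := psd_nonneg hP₁.posSemidef v₁
      have hqnn : 0 ≤ q := psd_nonneg hP₂.posSemidef v₂
      have hCSα : α ^ 2 ≤ p * a2 := psd_cauchy_schwarz hP₁.posSemidef v₁ z₁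
      have hCSγ : γ ^ 2 ≤ q * b2 := psd_cauchy_schwarz hP₂.posSemidef v₂ z₂
      have habsα : |α| ≤ Real.sqrt p * a := by
        rw [← Real.sqrt_sq_eq_abs]
        calc Real.sqrt (α ^ 2) ≤ Real.sqrt (p * a2) := Real.sqrt_le_sqrt hCSα
        _ = Real.sqrt p * Real.sqrt a2 := Real.sqrt_mul hpnn _
        _ = Real.sqrt p * a := by rw [← hadef]
      have habsγ : |γ| ≤ Real.sqrt q * b := by
        rw [← Real.sqrt_sq_eq_abs]
        calc Real.sqrt (γ ^ 2) ≤ Real.sqrt (q * b2) := Real.sqrt_le_sqrt hCSγ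
        _ = Real.sqrt q * Real.sqrt b2 := Real.sqrt_mul hqnn _
        _ = Real.sqrt q * b := by rw [← hbdef]
      have hprod : |α * γ| ≤ (Real.sqrt p * a) * (Real.sqrt q * b) := by
        rw [abs_mul]
        exact mul_le_mul habsα habsγ (abs_nonneg _) (by positivity)
      have hlow : -((Real.sqrt p * a) * (Real.sqrt q * b)) ≤ α * γ := by
        have := neg_abs_le (α * γ)
        linarith
      have hs : 0 ≤ (a * b) * p + 2 * (α * γ) + (a * b) * q := by
        set sp := Real.sqrt p with hspdef
        set sq := Real.sqrt q with hsqdef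
        have hsp : sp ^ 2 = p := Real.sq_sqrt hpnn
        have hsq : sq ^ 2 = q := Real.sq_sqrt hqnn
        have key : (a * b) * p + (a * b) * q - 2 * ((sp * a) * (sq * b))
            = (a * b) * (sp - sq) ^ 2 := by
          rw [← hsp, ← hsq]; ring
        have key2 : 0 ≤ (a * b) * (sp - sq) ^ 2 :=
          mul_nonneg (mul_pos hapos hbpos).le (sq_nonneg _)
        linarith
      have hrw : p + (a * b)⁻¹ * (γ * α) + (a * b)⁻¹ * (α * γ) + q
          = (a * b)⁻¹ * ((a * b) * p + 2 * (α * γ) + (a * b) * q) := by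
        field_simp
        ring
      rw [hrw]
      exact mul_nonneg (inv_nonneg.mpr (mul_pos hapos hbpos).le) hs
    have hQz : (Q + S) *ᵥ z = y := by
      have hc1 : Sum.elim z₁ z₂ ∘ Sum.inl = z₁ := rfl
      have hc2 : Sum.elim z₁ z₂ ∘ Sum.inr = z₂ := rfl
      have hbd : Q *ᵥ Sum.elim z₁ z₂
          = Matrix.fromBlocks (ω⁻¹ • P₁) 0 0 ((1 - ω)⁻¹ • P₂) *ᵥ Sum.elim z₁ z₂ := by
        rw [hQdef, fromBlocks_mulVec, fromBlocks_mulVec, hc1, hc2]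
        have e1 : Q12 *ᵥ z₂ = (b / a) • (P₁ *ᵥ z₁) := by
          rw [hQ12, smul_mulVec, vecMulVec_mulVec, smul_smul,
            dotProduct_comm (P₂ *ᵥ z₂) z₂, ← hb2def]
          congr 1
          rw [← hb2]
          field_simp
        have e2 : Q12ᵀ *ᵥ z₁ = (a / b) • (P₂ *ᵥ z₂) := by
          rw [hQ12T, smul_mulVec, vecMulVec_mulVec, smul_smul,
            dotProduct_comm (P₁ *ᵥ z₁) z₁, ← ha2def]
          congr 1
          rw [← ha2]
          field_simp
        have e3 : P₁ *ᵥ z₁ + Q12 *ᵥ z₂ = ω⁻¹ • (P₁ *ᵥ z₁) := by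
          rw [e1, hωinv]
          have : (a + b) / a = 1 + b / a := by field_simp
          rw [this, add_smul, one_smul]
        have e4 : Q12ᵀ *ᵥ z₁ + P₂ *ᵥ z₂ = (1 - ω)⁻¹ • (P₂ *ᵥ z₂) := by
          rw [e2, h1ωinv]
          have : (a + b) / b = a / b + 1 := by field_simp
          rw [this, add_smul, one_smul]
        rw [e3]
        rw [show (0 : Matrix (Fin d) (Fin d) ℝ) *ᵥ z₂ = 0 from zero_mulVec _,
          show (0 : Matrix (Fin d) (Fin d) ℝ) *ᵥ z₁ = 0 from zero_mulVec _,
          smul_mulVec, smul_mulVec, add_zero, zero_add, ← e4]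
      have : (Q + S) *ᵥ z = Bc d P₁ P₂ S ω *ᵥ z := by
        unfold Bc
        rw [add_mulVec, add_mulVec, ← hElim, hbd]
      rw [this, hBz]
    have hPd : (Q + S).PosDef := Matrix.PosDef.posSemidef_add hQpsd hS
    have hinv : (Q + S)⁻¹ *ᵥ y = z := by rw [← hQz, pd_inv_mulVec hPd]
    have hBinv : (Bc d P₁ P₂ S ω)⁻¹ *ᵥ y = z := by rw [← hBz, pd_inv_mulVec hBc]
    refine ⟨ω, ⟨h0.le, h1.le⟩, Q + S,
      ⟨Q, hQpsd, by rw [hQdef]; exact toBlocks_fromBlocks₁₁ _ _ _ _,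
        by rw [hQdef]; exact toBlocks_fromBlocks₂₂ _ _ _ _, rfl⟩, ?_⟩
    rw [hfv, hinv, hBinv]

end Strong

end CIProof

/-- `g(x)` is both the attained maximum of `h_x` over `[0,1]` and
the attained minimum of `P ↦ xᵀ Hᵀ P⁻¹ H x` over `𝒜`. -/
theorem gfun_max_min (d : ℕ) (hd : 1 ≤ d)
    (P₁ P₂ : Matrix (Fin d) (Fin d) ℝ) (hP₁ : P₁.PosDef) (hP₂ : P₂.PosDef)
    (S : Matrix (Fin d ⊕ Fin d) (Fin d ⊕ Fin d) ℝ) (hS : S.PosDef)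
    (x : Fin d → ℝ) :
    IsGreatest (hfun d P₁ P₂ S x '' Set.Icc (0 : ℝ) 1) (gfun d P₁ P₂ S x) ∧
    IsLeast ((fun P : Matrix (Fin d ⊕ Fin d) (Fin d ⊕ Fin d) ℝ =>
        x ⬝ᵥ ((Hmat d)ᵀ * P⁻¹ * Hmat d) *ᵥ x) '' Adm d P₁ P₂ S)
      (gfun d P₁ P₂ S x) := by
  classical
  have hFeq : ∀ P : Matrix (Fin d ⊕ Fin d) (Fin d ⊕ Fin d) ℝ,
      x ⬝ᵥ ((Hmat d)ᵀ * P⁻¹ * Hmat d) *ᵥ x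
        = Sum.elim x x ⬝ᵥ P⁻¹ *ᵥ Sum.elim x x := fun P => CIProof.dp_Hmat _ x
  obtain ⟨ω₀, hω₀, P₀, hP₀, hstrong⟩ := CIProof.strong_dual hd hP₁ hP₂ hS x
  have hweak : ∀ ω ∈ Set.Icc (0:ℝ) 1, ∀ P ∈ Adm d P₁ P₂ S,
      hfun d P₁ P₂ S x ω ≤ x ⬝ᵥ ((Hmat d)ᵀ * P⁻¹ * Hmat d) *ᵥ x := by
    intro ω hω P hP
    rw [hFeq]
    exact CIProof.weak_dual hP₁ hP₂ hS x hω hP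
  haveI hne : Nonempty (Adm d P₁ P₂ S) := ⟨⟨_, CIProof.adm_blockdiag_mem hP₁ hP₂⟩⟩
  have hbdd : BddBelow (Set.range fun P : (Adm d P₁ P₂ S) =>
      x ⬝ᵥ ((Hmat d)ᵀ * ((P : Matrix (Fin d ⊕ Fin d) (Fin d ⊕ Fin d) ℝ))⁻¹ * Hmat d) *ᵥ x) := by
    refine ⟨hfun d P₁ P₂ S x 0, ?_⟩
    rintro v ⟨⟨P, hP⟩, rfl⟩
    exact hweak 0 ⟨le_refl _, zero_le_one⟩ P hP
  have hg_le : ∀ P ∈ Adm d P₁ P₂ S,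
      gfun d P₁ P₂ S x ≤ x ⬝ᵥ ((Hmat d)ᵀ * P⁻¹ * Hmat d) *ᵥ x := by
    intro P hP
    exact ciInf_le hbdd (⟨P, hP⟩ : Adm d P₁ P₂ S)
  have h_le_g : ∀ ω ∈ Set.Icc (0:ℝ) 1, hfun d P₁ P₂ S x ω ≤ gfun d P₁ P₂ S x := by
    intro ω hω
    exact le_ciInf fun P => hweak ω hω P.1 P.2
  have hstrong' : x ⬝ᵥ ((Hmat d)ᵀ * P₀⁻¹ * Hmat d) *ᵥ x ≤ hfun d P₁ P₂ S x ω₀ := by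
    rw [hFeq]
    exact hstrong
  have hω₀g : hfun d P₁ P₂ S x ω₀ = gfun d P₁ P₂ S x :=
    le_antisymm (h_le_g ω₀ hω₀) ((hg_le P₀ hP₀).trans hstrong')
  have hFP₀ : x ⬝ᵥ ((Hmat d)ᵀ * P₀⁻¹ * Hmat d) *ᵥ x = gfun d P₁ P₂ S x :=
    le_antisymm (hstrong'.trans (le_of_eq hω₀g)) (hg_le P₀ hP₀)
  constructor
  · refine ⟨⟨ω₀, hω₀, hω₀g⟩, ?_⟩
    rintro v ⟨ω, hω, rfl⟩
    exact h_le_g ω hω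
  · refine ⟨⟨P₀, hP₀, hFP₀⟩, ?_⟩
    rintro v ⟨P, hP, rfl⟩
    exact hg_le P hP
end
end

section
/- Let d ≥ 1, let A₀ and A be symmetric d×d real matrices, let z ∈ ℝᵈ satisfy A₀ z = A z, and let g : ℝᵈ → ℝ satisfy xᵀ A x ≤ g(x) for all x ∈ ℝᵈ. Let y ∈ ℝᵈ, η ∈ ℝ, and for λ ∈ ℝ set x(λ) = η z + λ y. If either (1) there exists λ ≠ 0 with g(x(λ)) = x(λ)ᵀ A₀ x(λ), or (2) g(x(λ)) − x(λ)ᵀ A₀ x(λ) = o(λ²) as λ → 0, then yᵀ (A₀ − A) y ≥ 0. -/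
open Matrix Topology Asymptotics

noncomputable section

/-- the key lemma for the tightness proof.  If `A₀ z = A z`,
`xᵀ A x ≤ g(x)` for all `x`, and along the line `x(λ) = η z + λ y` either
`g(x(λ)) = x(λ)ᵀ A₀ x(λ)` for some `λ ≠ 0`, or
`g(x(λ)) − x(λ)ᵀ A₀ x(λ) = o(λ²)` as `λ → 0`, then `yᵀ (A₀ − A) y ≥ 0`. -/
theorem tightness_key_lemma (d : ℕ) (hd : 1 ≤ d)
    (A₀ A : Matrix (Fin d) (Fin d) ℝ) (hA₀ : A₀.IsSymm) (hA : A.IsSymm)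
    (z : Fin d → ℝ) (hz : A₀ *ᵥ z = A *ᵥ z)
    (g : (Fin d → ℝ) → ℝ) (hg : ∀ x : Fin d → ℝ, x ⬝ᵥ A *ᵥ x ≤ g x)
    (y : Fin d → ℝ) (η : ℝ)
    (hcase :
      (∃ l : ℝ, l ≠ 0 ∧
        g (η • z + l • y) = (η • z + l • y) ⬝ᵥ A₀ *ᵥ (η • z + l • y)) ∨
      (fun l : ℝ =>
          g (η • z + l • y) - (η • z + l • y) ⬝ᵥ A₀ *ᵥ (η • z + l • y))
        =o[𝓝[≠] (0 : ℝ)] fun l : ℝ => l ^ 2) :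
    0 ≤ y ⬝ᵥ (A₀ - A) *ᵥ y := by
  set M := A₀ - A with hM
  have hMsymm : M.IsSymm := by
    rw [Matrix.IsSymm] at *
    simp [hM, Matrix.transpose_sub, hA₀, hA]
  have hMz : M *ᵥ z = 0 := by
    rw [hM, Matrix.sub_mulVec, hz, sub_self]
  set c := y ⬝ᵥ M *ᵥ y with hc
  -- key quadratic identity along the line
  have key : ∀ l : ℝ, (η • z + l • y) ⬝ᵥ M *ᵥ (η • z + l • y) = l ^ 2 * c := by
    intro l
    have hzMy : z ⬝ᵥ M *ᵥ y = 0 := by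
      rw [Matrix.dotProduct_mulVec, ← Matrix.mulVec_transpose, hMsymm, hMz]
      simp
    rw [Matrix.mulVec_add, Matrix.mulVec_smul, Matrix.mulVec_smul, hMz, smul_zero,
      zero_add]
    simp only [dotProduct_add, dotProduct_smul, smul_dotProduct,
      add_dotProduct, smul_eq_mul, hzMy, hc]
    ring
  -- relation between A₀ form and A form
  have split : ∀ x : Fin d → ℝ,
      x ⬝ᵥ A₀ *ᵥ x - x ⬝ᵥ A *ᵥ x = x ⬝ᵥ M *ᵥ x := by
    intro x
    rw [hM, Matrix.sub_mulVec, dotProduct_sub]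
  rcases hcase with ⟨l, hl, heq⟩ | ho
  · -- g(x) = xᵀA₀x and xᵀAx ≤ g(x) give 0 ≤ l² c
    have h1 : 0 ≤ l ^ 2 * c := by
      rw [← key l, ← split]
      have := hg (η • z + l • y)
      linarith [heq ▸ this]
    have hl2 : 0 < l ^ 2 := by positivity
    nlinarith
  · by_contra hneg
    push_neg at hneg
    have hε : (0 : ℝ) < -c / 2 := by linarith
    have hev := (ho.def hε).and (eventually_mem_nhdsWithin (s := {(0:ℝ)}ᶜ) (a := 0))
    obtain ⟨l, hbound, hl0⟩ := hev.exists
    have hl : l ≠ 0 := hl0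
    have hl2 : 0 < l ^ 2 := by positivity
    set x := η • z + l • y with hx
    have h1 : x ⬝ᵥ A *ᵥ x ≤ g x := hg x
    have h2 : x ⬝ᵥ A₀ *ᵥ x - x ⬝ᵥ A *ᵥ x = l ^ 2 * c := by
      rw [split, hx, key l]
    have hb : |g x - x ⬝ᵥ A₀ *ᵥ x| ≤ (-c / 2) * l ^ 2 := by
      have := hbound
      simp only [Real.norm_eq_abs] at this
      calc |g x - x ⬝ᵥ A₀ *ᵥ x| ≤ (-c/2) * |l ^ 2| := this
        _ = (-c/2) * l ^ 2 := by rw [abs_of_pos hl2]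
    have h3 : g x - x ⬝ᵥ A₀ *ᵥ x ≤ (-c / 2) * l ^ 2 := le_of_abs_le hb
    -- l² c = x⬝A₀x - x⬝Ax ≥ x⬝A₀x - g x ≥ -(-c/2) l² = (c/2) l²
    have h4 : (c / 2) * l ^ 2 ≤ l ^ 2 * c := by linarith
    have h5 : 0 < -c / 2 * l ^ 2 := mul_pos hε hl2
    linarith
end
end

section
/- Let d ≥ 1, let P₁, P₂, R₁, R₂ be symmetric positive definite d×d real matrices, let ω ∈ (0,1), and let H ∈ ℝ^{2d×d} be the two stacked d×d identity blocks. Then Hᵀ (blockdiag(ω⁻¹ P₁ + R₁, (1−ω)⁻¹ P₂ + R₂))⁻¹ H = ω (P₁ + ω R₁)⁻¹ + (1−ω) (P₂ + (1−ω) R₂)⁻¹. In particular, the ESCI fused bound with block-diagonal known-component covariance blockdiag(R₁,R₂) coincides with the Split Covariance Intersection bound (Σᵢ ωᵢ (Pᵢ + ωᵢ Rᵢ)⁻¹)⁻¹ with ω₁ = ω, ω₂ = 1−ω. -/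
open Matrix

noncomputable section

lemma posDef_smul' {d : ℕ} {c : ℝ} (hc : 0 < c) {M : Matrix (Fin d) (Fin d) ℝ}
    (hM : M.PosDef) : (c • M).PosDef := by
  refine ⟨?_, fun x hx => ?_⟩
  · simpa [Matrix.IsHermitian, Matrix.conjTranspose_smul] using congrArg (c • ·) hM.1.eq
  · have h := hM.2 hx
    simpa [Matrix.smul_apply, mul_assoc, mul_left_comm c, Finsupp.mul_sum] using mul_pos hc h

lemma smul_posdef_inv {d : ℕ} (c : ℝ) (hc : 0 < c) (M : Matrix (Fin d) (Fin d) ℝ)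
    (hM : M.PosDef) : (c⁻¹ • M)⁻¹ = c • M⁻¹ := by
  apply Matrix.inv_eq_right_inv
  rw [Matrix.smul_mul, Matrix.mul_smul, smul_smul, inv_mul_cancel₀ hc.ne',
    Matrix.mul_nonsing_inv _ hM.det_pos.ne'.isUnit, one_smul]

/-- with a block-diagonal known-component covariance
`blockdiag(R₁, R₂)`, the ESCI fused precision equals the SCI precision
`ω (P₁ + ω R₁)⁻¹ + (1−ω) (P₂ + (1−ω) R₂)⁻¹`, hence the ESCI fused bound equals
the SCI bound. -/
theorem esci_blockdiag_eq_sci (d : ℕ) (hd : 1 ≤ d)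
    (P₁ P₂ R₁ R₂ : Matrix (Fin d) (Fin d) ℝ)
    (hP₁ : P₁.PosDef) (hP₂ : P₂.PosDef) (hR₁ : R₁.PosDef) (hR₂ : R₂.PosDef)
    (ω : ℝ) (hω : ω ∈ Set.Ioo (0 : ℝ) 1) :
    (Matrix.fromRows (1 : Matrix (Fin d) (Fin d) ℝ) (1 : Matrix (Fin d) (Fin d) ℝ))ᵀ *
        (Matrix.fromBlocks (ω⁻¹ • P₁ + R₁) 0 0 ((1 - ω)⁻¹ • P₂ + R₂))⁻¹ *
        Matrix.fromRows (1 : Matrix (Fin d) (Fin d) ℝ) (1 : Matrix (Fin d) (Fin d) ℝ) =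
      ω • (P₁ + ω • R₁)⁻¹ + (1 - ω) • (P₂ + (1 - ω) • R₂)⁻¹ ∧
    ((Matrix.fromRows (1 : Matrix (Fin d) (Fin d) ℝ) (1 : Matrix (Fin d) (Fin d) ℝ))ᵀ *
        (Matrix.fromBlocks (ω⁻¹ • P₁ + R₁) 0 0 ((1 - ω)⁻¹ • P₂ + R₂))⁻¹ *
        Matrix.fromRows (1 : Matrix (Fin d) (Fin d) ℝ) (1 : Matrix (Fin d) (Fin d) ℝ))⁻¹ =
      (ω • (P₁ + ω • R₁)⁻¹ + (1 - ω) • (P₂ + (1 - ω) • R₂)⁻¹)⁻¹ := by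
  obtain ⟨hω0, hω1⟩ := hω
  have hω1' : 0 < 1 - ω := by linarith
  set A := ω⁻¹ • P₁ + R₁ with hA
  set D := (1 - ω)⁻¹ • P₂ + R₂ with hD
  have hApd : A.PosDef := (posDef_smul' (by positivity) hP₁).add_posSemidef hR₁.posSemidef
  have hDpd : D.PosDef := (posDef_smul' (by positivity) hP₂).add_posSemidef hR₂.posSemidef
  have hinv : (Matrix.fromBlocks A 0 0 D)⁻¹ = Matrix.fromBlocks A⁻¹ 0 0 D⁻¹ := by
    apply Matrix.inv_eq_right_inv
    rw [Matrix.fromBlocks_multiply]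
    simp [Matrix.mul_nonsing_inv _ hApd.det_pos.ne'.isUnit, Matrix.mul_nonsing_inv _ hDpd.det_pos.ne'.isUnit,
      Matrix.fromBlocks_one]
  have hA' : A = ω⁻¹ • (P₁ + ω • R₁) := by
    rw [hA, smul_add, smul_smul, inv_mul_cancel₀ hω0.ne', one_smul]
  have hD' : D = (1 - ω)⁻¹ • (P₂ + (1 - ω) • R₂) := by
    rw [hD, smul_add, smul_smul, inv_mul_cancel₀ hω1'.ne', one_smul]
  have hAi : A⁻¹ = ω • (P₁ + ω • R₁)⁻¹ := by
    rw [hA', smul_posdef_inv ω hω0 _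
      (hP₁.add_posSemidef (posDef_smul' hω0 hR₁).posSemidef)]
  have hDi : D⁻¹ = (1 - ω) • (P₂ + (1 - ω) • R₂)⁻¹ := by
    rw [hD', smul_posdef_inv (1 - ω) hω1' _
      (hP₂.add_posSemidef (posDef_smul' hω1' hR₂).posSemidef)]
  have key : (Matrix.fromRows (1 : Matrix (Fin d) (Fin d) ℝ) (1 : Matrix (Fin d) (Fin d) ℝ))ᵀ *
      (Matrix.fromBlocks A 0 0 D)⁻¹ *
      Matrix.fromRows (1 : Matrix (Fin d) (Fin d) ℝ) (1 : Matrix (Fin d) (Fin d) ℝ) =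
      ω • (P₁ + ω • R₁)⁻¹ + (1 - ω) • (P₂ + (1 - ω) • R₂)⁻¹ := by
    rw [hinv, Matrix.transpose_fromRows, Matrix.transpose_one,
      Matrix.fromCols_mul_fromBlocks, Matrix.fromCols_mul_fromRows]
    simp [hAi, hDi]
  exact ⟨key, by rw [key]⟩
end
end

section
/- Let d, q, N ≥ 1, let ω ∈ ℝ^N with ωᵢ > 0 for all i, let P₁⁽¹⁾,…,P_N⁽¹⁾ and P₁⁽ⁱⁿᵈ⁾,…,P_N⁽ⁱⁿᵈ⁾ be positive semidefinite d×d real matrices such that P'ᵢ := Pᵢ⁽¹⁾ + ωᵢ Pᵢ⁽ⁱⁿᵈ⁾ is positive definite for every i, let Q be a symmetric positive definite q×q real matrix, let M₁,…,M_N ∈ ℝ^{d×q}, let M ∈ ℝ^{Nd×q} be the vertical stack of the Mᵢ, and let H = 1_N ⊗ I_d ∈ ℝ^{Nd×d}. Set D = blockdiag(ω₁⁻¹P₁⁽¹⁾ + P₁⁽ⁱⁿᵈ⁾, …, ω_N⁻¹P_N⁽¹⁾ + P_N⁽ⁱⁿᵈ⁾), S₀ = Σᵢ ωᵢ Mᵢᵀ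 (P'ᵢ)⁻¹ Mᵢ + Q⁻¹ and S₁ = Σᵢ ωᵢ (P'ᵢ)⁻¹ Mᵢ. Then Hᵀ (D + M Q Mᵀ)⁻¹ H = Σᵢ ωᵢ (P'ᵢ)⁻¹ − S₁ S₀⁻¹ S₁ᵀ. -/
open Matrix

noncomputable section

namespace Esci

variable {N d : ℕ}

def blk (A : Fin N → Matrix (Fin d) (Fin d) ℝ) : Matrix (Fin N × Fin d) (Fin N × Fin d) ℝ :=
  Matrix.of fun p r => if p.1 = r.1 then A p.1 p.2 r.2 else 0

def stk {m : Type*} (C : Fin N → Matrix (Fin d) m ℝ) : Matrix (Fin N × Fin d) m ℝ :=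
  Matrix.of fun p b => C p.1 p.2 b

lemma blk_mul_blk (A B : Fin N → Matrix (Fin d) (Fin d) ℝ) :
    blk A * blk B = blk fun i => A i * B i := by
  ext ⟨i, k⟩ ⟨j, l⟩
  simp only [blk, Matrix.mul_apply, Matrix.of_apply, Fintype.sum_prod_type]
  rw [Finset.sum_eq_single i]
  · by_cases h : i = j <;> simp [h, Matrix.mul_apply]
  · intro b _ hb
    simp [Ne.symm hb]
  · simp

lemma blk_mul_stk {m : Type*} [Fintype m] (A : Fin N → Matrix (Fin d) (Fin d) ℝ)
    (C : Fin N → Matrix (Fin d) m ℝ) :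
    blk A * stk C = stk fun i => A i * C i := by
  ext ⟨i, k⟩ b
  simp only [blk, stk, Matrix.mul_apply, Matrix.of_apply, Fintype.sum_prod_type]
  rw [Finset.sum_eq_single i]
  · simp [Matrix.mul_apply]
  · intro b' _ hb
    simp [Ne.symm hb]
  · simp

lemma stkT_mul_stk {m m' : Type*} [Fintype m] [Fintype m'] (C : Fin N → Matrix (Fin d) m ℝ)
    (C' : Fin N → Matrix (Fin d) m' ℝ) :
    (stk C)ᵀ * stk C' = ∑ i, (C i)ᵀ * C' i := by
  ext a c
  simp only [stk, Matrix.mul_apply, Matrix.transpose_apply, Matrix.of_apply,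
    Fintype.sum_prod_type, Matrix.sum_apply]

lemma blk_one : (blk fun _ : Fin N => (1 : Matrix (Fin d) (Fin d) ℝ)) = 1 := by
  ext p r
  simp [blk, Matrix.one_apply, Prod.ext_iff, ite_and]

lemma smul_posDef {c : ℝ} (hc : 0 < c) {A : Matrix (Fin d) (Fin d) ℝ} (hA : A.PosDef) :
    (c • A).PosDef := by
  refine Matrix.posDef_iff_dotProduct_mulVec.mpr ⟨?_, fun x hx => ?_⟩
  · rw [Matrix.IsHermitian, Matrix.conjTranspose_smul, star_trivial, hA.1]
  rw [Matrix.smul_mulVec, dotProduct_smul]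
  exact mul_pos hc (hA.dotProduct_mulVec_pos hx)

lemma blk_posDef {A : Fin N → Matrix (Fin d) (Fin d) ℝ} (hA : ∀ i, (A i).PosDef) :
    (blk A).PosDef := by
  rw [Matrix.posDef_iff_dotProduct_mulVec]
  constructor
  · ext ⟨i, k⟩ ⟨j, l⟩
    simp only [blk, Matrix.conjTranspose_apply, Matrix.of_apply, star_trivial]
    by_cases h : i = j
    · subst h
      simp only [if_pos rfl]
      have := congrFun (congrFun (hA i).1 k) l
      simpa [Matrix.conjTranspose_apply] using this
    · simp [h, Ne.symm h]
  · intro x hx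
    have h1 : ∀ i k, (blk A *ᵥ x) (i, k) = (A i *ᵥ fun l => x (i, l)) k := by
      intro i k
      simp only [Matrix.mulVec, dotProduct, blk, Matrix.of_apply, Fintype.sum_prod_type]
      rw [Finset.sum_eq_single i]
      · simp
      · intro b _ hb
        simp [Ne.symm hb]
      · simp
    have expand : star x ⬝ᵥ blk A *ᵥ x
        = ∑ i, star (fun l => x (i, l)) ⬝ᵥ (A i *ᵥ fun l => x (i, l)) := by
      simp only [dotProduct, Fintype.sum_prod_type, Pi.star_apply, star_trivial]
      refine Finset.sum_congr rfl fun i _ => Finset.sum_congr rfl fun k _ => ?_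
      rw [h1]
    rw [expand]
    obtain ⟨p, hp⟩ : ∃ p, x p ≠ 0 := Function.ne_iff.mp hx
    refine Finset.sum_pos' (fun i _ => (hA i).posSemidef.dotProduct_mulVec_nonneg _) ⟨p.1, Finset.mem_univ _, ?_⟩
    exact (hA p.1).dotProduct_mulVec_pos (fun h => hp (by simpa using congrFun h p.2))

end Esci

open Esci


/-- Woodbury-style simplification of the ESCI fused precision in
the presence of a common noise:
`Hᵀ (D + M Q Mᵀ)⁻¹ H = Σᵢ ωᵢ (P'ᵢ)⁻¹ − S₁ S₀⁻¹ S₁ᵀ`. -/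
theorem esci_common_noise_formula (d q N : ℕ) (hd : 1 ≤ d) (hq : 1 ≤ q) (hN : 1 ≤ N)
    (ω : Fin N → ℝ) (hω : ∀ i, 0 < ω i)
    (P1 Pind : Fin N → Matrix (Fin d) (Fin d) ℝ)
    (hP1 : ∀ i, (P1 i).PosSemidef) (hPind : ∀ i, (Pind i).PosSemidef)
    (hP' : ∀ i, (P1 i + ω i • Pind i).PosDef)
    (Q : Matrix (Fin q) (Fin q) ℝ) (hQ : Q.PosDef)
    (Mi : Fin N → Matrix (Fin d) (Fin q) ℝ)
    (M : Matrix (Fin N × Fin d) (Fin q) ℝ) (hM : ∀ p b, M p b = Mi p.1 p.2 b)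
    (H : Matrix (Fin N × Fin d) (Fin d) ℝ)
    (hH : ∀ p k, H p k = if p.2 = k then (1 : ℝ) else 0)
    (D : Matrix (Fin N × Fin d) (Fin N × Fin d) ℝ)
    (hD : ∀ p r, D p r =
      if p.1 = r.1 then ((ω p.1)⁻¹ • P1 p.1 + Pind p.1) p.2 r.2 else 0) :
    Hᵀ * (D + M * Q * Mᵀ)⁻¹ * H =
      (∑ i, ω i • (P1 i + ω i • Pind i)⁻¹) -
        (∑ i, ω i • ((P1 i + ω i • Pind i)⁻¹ * Mi i)) *
          (∑ i, ω i • ((Mi i)ᵀ * (P1 i + ω i • Pind i)⁻¹ * Mi i) + Q⁻¹)⁻¹ *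
        (∑ i, ω i • ((P1 i + ω i • Pind i)⁻¹ * Mi i))ᵀ := by
  set Pp : Fin N → Matrix (Fin d) (Fin d) ℝ := fun i => P1 i + ω i • Pind i with hPp
  -- D in block form
  have hDeq : D = blk fun i => (ω i)⁻¹ • Pp i := by
    ext p r
    rw [hD]
    simp only [blk, Matrix.of_apply, hPp]
    congr 1
    rw [smul_add, smul_smul, inv_mul_cancel₀ (hω p.1).ne', one_smul]
  have hPpu : ∀ i, IsUnit (Pp i).det := fun i =>
    (Matrix.isUnit_iff_isUnit_det _).mp (hP' i).isUnit
  have hblock : ∀ i, ((ω i)⁻¹ • Pp i) * (ω i • (Pp i)⁻¹) = 1 := by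
    intro i
    rw [Matrix.smul_mul, Matrix.mul_smul, smul_smul, inv_mul_cancel₀ (hω i).ne',
      one_smul, Matrix.mul_nonsing_inv _ (hPpu i)]
  have hDE : D * blk (fun i => ω i • (Pp i)⁻¹) = 1 := by
    rw [hDeq, blk_mul_blk]
    simp only [hblock]
    exact blk_one
  have hDinv : D⁻¹ = blk fun i => ω i • (Pp i)⁻¹ := Matrix.inv_eq_right_inv hDE
  have hDu : IsUnit D := by
    rw [hDeq] at hDE ⊢
    have := invertibleOfRightInverse (h := hDE)
    exact isUnit_of_invertible _
  -- D⁻¹ is positive definite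
  have hDinvPD : (D⁻¹).PosDef := by
    rw [hDinv]
    exact blk_posDef fun i => smul_posDef (hω i) (hP' i).inv
  -- the inner matrix is positive definite
  have hSpd : (Q⁻¹ + Mᵀ * D⁻¹ * M).PosDef := by
    have h2 : (Mᵀ * D⁻¹ * M).PosSemidef := by
      have := hDinvPD.posSemidef.conjTranspose_mul_mul_same M
      simpa using this
    exact hQ.inv.add_posSemidef h2
  rw [Matrix.add_mul_mul_inv_eq_sub D M Q Mᵀ hDu hQ.isUnit hSpd.isUnit]
  -- stacked forms
  have hMeq : M = stk Mi := by ext p b; exact hM p b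
  have hHeq : H = stk fun _ => (1 : Matrix (Fin d) (Fin d) ℝ) := by
    ext p k
    rw [hH]
    simp [stk, Matrix.one_apply]
  have eDH : D⁻¹ * H = stk fun i => ω i • (Pp i)⁻¹ := by
    rw [hDinv, hHeq, blk_mul_stk]
    simp
  have eDM : D⁻¹ * M = stk fun i => ω i • ((Pp i)⁻¹ * Mi i) := by
    rw [hDinv, hMeq, blk_mul_stk]
    simp [Matrix.smul_mul]
  have e1 : Hᵀ * (D⁻¹ * H) = ∑ i, ω i • (Pp i)⁻¹ := by
    rw [eDH, hHeq, stkT_mul_stk]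
    simp
  have e2 : Hᵀ * (D⁻¹ * M) = ∑ i, ω i • ((Pp i)⁻¹ * Mi i) := by
    rw [eDM, hHeq, stkT_mul_stk]
    simp
  have hsym : ∀ i, ((Pp i)⁻¹)ᵀ = (Pp i)⁻¹ := by
    intro i
    have h := (hP' i).inv.isHermitian
    simpa [Matrix.IsHermitian, Matrix.conjTranspose_eq_transpose_of_trivial] using h
  have e3 : Mᵀ * (D⁻¹ * H) = (∑ i, ω i • ((Pp i)⁻¹ * Mi i))ᵀ := by
    rw [eDH, hMeq, stkT_mul_stk, Matrix.transpose_sum]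
    refine Finset.sum_congr rfl fun i _ => ?_
    rw [Matrix.transpose_smul, Matrix.transpose_mul, hsym, Matrix.mul_smul]
  have e4 : Mᵀ * (D⁻¹ * M) = ∑ i, ω i • ((Mi i)ᵀ * (Pp i)⁻¹ * Mi i) := by
    rw [eDM, hMeq, stkT_mul_stk]
    refine Finset.sum_congr rfl fun i _ => ?_
    rw [Matrix.mul_smul, Matrix.mul_assoc]
  have key : Hᵀ * (D⁻¹ - D⁻¹ * M * (Q⁻¹ + Mᵀ * D⁻¹ * M)⁻¹ * Mᵀ * D⁻¹) * H
      = Hᵀ * (D⁻¹ * H) -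
        (Hᵀ * (D⁻¹ * M)) * (Q⁻¹ + Mᵀ * (D⁻¹ * M))⁻¹ * (Mᵀ * (D⁻¹ * H)) := by
    simp only [Matrix.mul_sub, Matrix.sub_mul, Matrix.mul_assoc]
  rw [key, e1, e2, e3, e4, add_comm (Q⁻¹)]
end
end
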